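/- arXiv:2311.02467 — 5 statements merged into one kernel-verified Lean document; each statement's English description precedes it below -/
import Mathlib

section
/- Lemma C.1 (explicit inverse of the interaction second-moment matrix, polynomial case). For every m ≥ 1, every 1 ≤ β ≤ m, and every e ∈ (0,1)^m, the matrix Σ_β(e) is invertible and its inverse is T_β(e); that is, Σ_β(e)·T_β(e) = T_β(e)·Σ_β(e) = I. -/
open Finset

/-- The index set `I_β`: subsets of `{1,…,m}` of cardinality at most `β`
(including the empty set). -/
def IdxSet (m β : ℕ) : Type := {S : Finset (Fin m) // S.card ≤ β}

instance (m β : ℕ) : Fintype (IdxSet m β) := Subtype.fintype _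
instance (m β : ℕ) : DecidableEq (IdxSet m β) := Subtype.instDecidableEq

/-- The interaction second-moment matrix `Σ_β(e)` with entries
`Σ_β(e)_{J,K} = ∏_{j ∈ J∪K} e_j`. -/
noncomputable def SigmaB (m β : ℕ) (e : Fin m → ℝ) :
    Matrix (IdxSet m β) (IdxSet m β) ℝ :=
  Matrix.of fun J K => ∏ j ∈ (J.1 ∪ K.1), e j

/-- The explicit candidate inverse `T_β(e)` with entries
`T_β(e)_{J,K} = ∏_{j∈J}(−1/e_j) ⋅ ∏_{k∈K}(−1/e_k) ⋅
Σ_{U ∈ I_β, J∪K ⊆ U} ∏_{ℓ∈U} e_ℓ/(1−e_ℓ)`. -/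
noncomputable def TB (m β : ℕ) (e : Fin m → ℝ) :
    Matrix (IdxSet m β) (IdxSet m β) ℝ :=
  Matrix.of fun J K =>
    (∏ j ∈ J.1, (-1 / e j)) * (∏ k ∈ K.1, (-1 / e k)) *
      ∑ U : IdxSet m β, if J.1 ∪ K.1 ⊆ U.1 then ∏ ℓ ∈ U.1, e ℓ / (1 - e ℓ) else 0


section Aux

variable {m β : ℕ}

/-- Sum over the index type reduces to a sum over a powerset, when the summand is
supported on subsets of a set `J` of size `≤ β`. -/
lemma sum_idx (J : Finset (Fin m)) (hJ : J.card ≤ β) (f : Finset (Fin m) → ℝ)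
    (hf : ∀ U, ¬ U ⊆ J → f U = 0) :
    ∑ U : IdxSet m β, f U.1 = ∑ U ∈ J.powerset, f U := by
  classical
  have hid : ∑ U : IdxSet m β, f U.1
      = ∑ U : {S : Finset (Fin m) // S.card ≤ β}, f U.1 := rfl
  rw [hid, ← Finset.sum_subtype (Finset.univ.filter fun S : Finset (Fin m) => S.card ≤ β)
      (by intro S; simp) f]
  refine (Finset.sum_subset ?_ ?_).symm
  · intro U hU
    simp only [Finset.mem_powerset] at hU
    simp only [Finset.mem_filter, Finset.mem_univ, true_and]
    exact le_trans (Finset.card_le_card hU) hJ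
  · intro U _ hU
    exact hf U (by simpa using hU)

lemma neg_one_pow_sum (s : Finset (Fin m)) :
    ∑ V ∈ s.powerset, (-1 : ℝ) ^ V.card = if s = ∅ then 1 else 0 := by
  have := Finset.sum_powerset_neg_one_pow_card (x := s)
  have h2 : ((∑ V ∈ s.powerset, (-1 : ℤ) ^ V.card : ℤ) : ℝ)
      = ∑ V ∈ s.powerset, (-1 : ℝ) ^ V.card := by push_cast; ring_nf
  rw [← h2, this]
  split <;> norm_num

lemma moebius_sum (J K : Finset (Fin m)) :
    ∑ U ∈ J.powerset, (if K ⊆ U then (-1 : ℝ) ^ (U \ K).card else 0)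
      = if J = K then 1 else 0 := by
  classical
  by_cases hKJ : K ⊆ J
  · rw [← Finset.sum_filter]
    have hb : ∑ U ∈ J.powerset.filter (fun U => K ⊆ U), (-1 : ℝ) ^ (U \ K).card
        = ∑ V ∈ (J \ K).powerset, (-1 : ℝ) ^ V.card := by
      refine Finset.sum_nbij' (fun U => U \ K) (fun V => V ∪ K) ?_ ?_ ?_ ?_ ?_
      · intro U hU
        simp only [Finset.mem_filter, Finset.mem_powerset] at hU
        exact Finset.mem_powerset.2 (Finset.sdiff_subset_sdiff hU.1 (le_refl _))
      · intro V hV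
        simp only [Finset.mem_powerset] at hV
        simp only [Finset.mem_filter, Finset.mem_powerset]
        constructor
        · exact Finset.union_subset (hV.trans Finset.sdiff_subset) hKJ
        · exact Finset.subset_union_right
      · intro U hU
        simp only [Finset.mem_filter, Finset.mem_powerset] at hU
        exact Finset.sdiff_union_of_subset hU.2
      · intro V hV
        simp only [Finset.mem_powerset] at hV
        have : Disjoint V K := Finset.disjoint_of_subset_left hV Finset.sdiff_disjoint
        show (V ∪ K) \ K = V
        rw [Finset.union_sdiff_right, Finset.sdiff_eq_self_of_disjoint this]
      · intro U hU; rfl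
    rw [hb, neg_one_pow_sum]
    have : J \ K = ∅ ↔ J = K := by
      rw [Finset.sdiff_eq_empty_iff_subset]
      exact ⟨fun h => Finset.Subset.antisymm h hKJ, fun h => h ▸ le_refl _⟩
    by_cases hJK : J = K
    · rw [if_pos (this.2 hJK), if_pos hJK]
    · rw [if_neg (fun h => hJK (this.1 h)), if_neg hJK]
  · rw [Finset.sum_eq_zero, if_neg]
    · rintro rfl; exact hKJ (le_refl _)
    · intro U hU
      rw [if_neg]
      intro hKU
      exact hKJ (hKU.trans (Finset.mem_powerset.1 hU))

lemma moebius_sum' (J K : Finset (Fin m)) :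
    ∑ U ∈ J.powerset, (if K ⊆ U then (-1 : ℝ) ^ (J \ U).card else 0)
      = if J = K then 1 else 0 := by
  classical
  by_cases hKJ : K ⊆ J
  · rw [← Finset.sum_filter]
    have hb : ∑ U ∈ J.powerset.filter (fun U => K ⊆ U), (-1 : ℝ) ^ (J \ U).card
        = ∑ V ∈ (J \ K).powerset, (-1 : ℝ) ^ V.card := by
      refine Finset.sum_nbij' (fun U => J \ U) (fun V => J \ V) ?_ ?_ ?_ ?_ ?_
      · intro U hU
        simp only [Finset.mem_filter, Finset.mem_powerset] at hU
        exact Finset.mem_powerset.2 (Finset.sdiff_subset_sdiff (le_refl _) hU.2)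
      · intro V hV
        simp only [Finset.mem_powerset] at hV
        simp only [Finset.mem_filter, Finset.mem_powerset]
        refine ⟨Finset.sdiff_subset, ?_⟩
        intro k hk
        simp only [Finset.mem_sdiff]
        refine ⟨hKJ hk, fun hkV => ?_⟩
        have := hV hkV
        simp only [Finset.mem_sdiff] at this
        exact this.2 hk
      · intro U hU
        simp only [Finset.mem_filter, Finset.mem_powerset] at hU
        exact Finset.sdiff_sdiff_eq_self hU.1
      · intro V hV
        simp only [Finset.mem_powerset] at hV
        exact Finset.sdiff_sdiff_eq_self (hV.trans Finset.sdiff_subset)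
      · intro U hU; rfl
    rw [hb, neg_one_pow_sum]
    have : J \ K = ∅ ↔ J = K := by
      rw [Finset.sdiff_eq_empty_iff_subset]
      exact ⟨fun h => Finset.Subset.antisymm h hKJ, fun h => h ▸ le_refl _⟩
    by_cases hJK : J = K
    · rw [if_pos (this.2 hJK), if_pos hJK]
    · rw [if_neg (fun h => hJK (this.1 h)), if_neg hJK]
  · rw [Finset.sum_eq_zero, if_neg]
    · rintro rfl; exact hKJ (le_refl _)
    · intro U hU
      rw [if_neg]
      intro hKU
      exact hKJ (hKU.trans (Finset.mem_powerset.1 hU))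

end Aux

section Mat

open Matrix

variable (m β : ℕ) (e : Fin m → ℝ)

/-- zeta matrix -/
noncomputable def Zm : Matrix (IdxSet m β) (IdxSet m β) ℝ :=
  Matrix.of fun J K => if K.1 ⊆ J.1 then 1 else 0

/-- Möbius matrix -/
noncomputable def Mm : Matrix (IdxSet m β) (IdxSet m β) ℝ :=
  Matrix.of fun J K => if K.1 ⊆ J.1 then (-1) ^ (J.1 \ K.1).card else 0

noncomputable def Smat : Matrix (IdxSet m β) (IdxSet m β) ℝ :=
  Matrix.diagonal fun J => (-1) ^ J.1.card

noncomputable def De : Matrix (IdxSet m β) (IdxSet m β) ℝ :=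
  Matrix.diagonal fun J => ∏ j ∈ J.1, e j

noncomputable def Ds : Matrix (IdxSet m β) (IdxSet m β) ℝ :=
  Matrix.diagonal fun J => ∏ j ∈ J.1, (-1 / e j)

noncomputable def Lm : Matrix (IdxSet m β) (IdxSet m β) ℝ :=
  Matrix.diagonal fun J => ∏ j ∈ J.1, ((1 - e j) / e j)

noncomputable def Lm' : Matrix (IdxSet m β) (IdxSet m β) ℝ :=
  Matrix.diagonal fun J => ∏ j ∈ J.1, (e j / (1 - e j))

lemma ZM_mul : Zm m β * Mm m β = 1 := by
  ext J K
  rw [Matrix.mul_apply, Matrix.one_apply]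
  simp only [Zm, Mm, Matrix.of_apply]
  have hsum : ∑ U : IdxSet m β,
      (if U.1 ⊆ J.1 then (1:ℝ) else 0) * (if K.1 ⊆ U.1 then (-1) ^ (U.1 \ K.1).card else 0)
      = ∑ U ∈ J.1.powerset,
        (if U ⊆ J.1 then (1:ℝ) else 0) * (if K.1 ⊆ U then (-1) ^ (U \ K.1).card else 0) := by
    refine sum_idx J.1 J.2
      (fun U => (if U ⊆ J.1 then (1:ℝ) else 0) * (if K.1 ⊆ U then (-1) ^ (U \ K.1).card else 0))
      ?_
    intro U hU; simp only [if_neg hU, zero_mul]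
  rw [hsum]
  have : ∀ U ∈ J.1.powerset,
      (if U ⊆ J.1 then (1:ℝ) else 0) * (if K.1 ⊆ U then (-1) ^ (U \ K.1).card else 0)
      = (if K.1 ⊆ U then (-1 : ℝ) ^ (U \ K.1).card else 0) := by
    intro U hU
    rw [if_pos (Finset.mem_powerset.1 hU), one_mul]
  rw [Finset.sum_congr rfl this, moebius_sum]
  by_cases h : J = K
  · rw [if_pos (by rw [h]), if_pos h]
  · rw [if_neg (fun hh => h (Subtype.ext hh)), if_neg h]

lemma MZ_mul : Mm m β * Zm m β = 1 := by
  ext J K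
  rw [Matrix.mul_apply, Matrix.one_apply]
  simp only [Zm, Mm, Matrix.of_apply]
  have hsum : ∑ U : IdxSet m β,
      (if U.1 ⊆ J.1 then (-1 : ℝ) ^ (J.1 \ U.1).card else 0) * (if K.1 ⊆ U.1 then 1 else 0)
      = ∑ U ∈ J.1.powerset,
        (if U ⊆ J.1 then (-1 : ℝ) ^ (J.1 \ U).card else 0) * (if K.1 ⊆ U then 1 else 0) := by
    refine sum_idx J.1 J.2
      (fun U => (if U ⊆ J.1 then (-1 : ℝ) ^ (J.1 \ U).card else 0) * (if K.1 ⊆ U then 1 else 0))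
      ?_
    intro U hU; simp only [if_neg hU, zero_mul]
  rw [hsum]
  have : ∀ U ∈ J.1.powerset,
      (if U ⊆ J.1 then (-1 : ℝ) ^ (J.1 \ U).card else 0) * (if K.1 ⊆ U then 1 else 0)
      = (if K.1 ⊆ U then (-1 : ℝ) ^ (J.1 \ U).card else 0) := by
    intro U hU
    rw [if_pos (Finset.mem_powerset.1 hU)]
    split <;> ring
  rw [Finset.sum_congr rfl this, moebius_sum']
  by_cases h : J = K
  · rw [if_pos (by rw [h]), if_pos h]
  · rw [if_neg (fun hh => h (Subtype.ext hh)), if_neg h]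

lemma Mm_eq : Mm m β = Smat m β * Zm m β * Smat m β := by
  ext J K
  simp only [Mm, Smat, Zm, Matrix.mul_diagonal, Matrix.diagonal_mul, Matrix.of_apply]
  by_cases h : K.1 ⊆ J.1
  · rw [if_pos h, if_pos h]
    have hc : (J.1 \ K.1).card + K.1.card = J.1.card :=
      Finset.card_sdiff_add_card_eq_card h
    have h1 : ((-1:ℝ)) ^ K.1.card * ((-1:ℝ)) ^ K.1.card = 1 := by
      rw [← pow_add, ← two_mul, pow_mul]; norm_num
    have h2 : (-1:ℝ) ^ J.1.card = (-1) ^ (J.1 \ K.1).card * (-1) ^ K.1.card := by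
      rw [← pow_add, hc]
    rw [h2]
    linear_combination (-((-1:ℝ) ^ ((J.1 \ K.1).card))) * h1
  · rw [if_neg h, if_neg h]; ring

lemma diag_comm {n : Type*} [Fintype n] [DecidableEq n] (d d' : n → ℝ) :
    Matrix.diagonal d * Matrix.diagonal d' = Matrix.diagonal d' * Matrix.diagonal d := by
  rw [Matrix.diagonal_mul_diagonal, Matrix.diagonal_mul_diagonal]
  exact congrArg Matrix.diagonal (funext fun i => mul_comm _ _)

lemma Smat_sq : Smat m β * Smat m β = 1 := by
  rw [Smat, Matrix.diagonal_mul_diagonal, ← Matrix.diagonal_one]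
  exact congrArg Matrix.diagonal (funext fun J => by
    rw [← pow_add, ← two_mul, pow_mul]; norm_num)

lemma DeDs (he : ∀ j, e j ≠ 0) : De m β e * Ds m β e = Smat m β := by
  rw [De, Ds, Smat, Matrix.diagonal_mul_diagonal]
  refine congrArg Matrix.diagonal (funext fun J => ?_)
  show (∏ j ∈ J.1, e j) * ∏ j ∈ J.1, (-1 / e j) = (-1 : ℝ) ^ J.1.card
  rw [← Finset.prod_mul_distrib,
    Finset.prod_congr rfl (fun j _ => show e j * (-1 / e j) = -1 by
      have h0 := he j; field_simp),
    Finset.prod_const]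

lemma DsDe (he : ∀ j, e j ≠ 0) : Ds m β e * De m β e = Smat m β := by
  calc Ds m β e * De m β e = De m β e * Ds m β e := diag_comm _ _
    _ = Smat m β := DeDs m β e he

lemma LmLm' (he0 : ∀ j, e j ≠ 0) (he1 : ∀ j, 1 - e j ≠ 0) :
    Lm m β e * Lm' m β e = 1 := by
  rw [Lm, Lm', Matrix.diagonal_mul_diagonal, ← Matrix.diagonal_one]
  refine congrArg Matrix.diagonal (funext fun J => ?_)
  show (∏ j ∈ J.1, ((1 - e j) / e j)) * ∏ j ∈ J.1, (e j / (1 - e j)) = 1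
  rw [← Finset.prod_mul_distrib,
    Finset.prod_congr rfl (fun j _ => show (1 - e j) / e j * (e j / (1 - e j)) = 1 by
      have h0 := he0 j; have h1 := he1 j; field_simp)]
  exact Finset.prod_const_one

lemma Lm'Lm (he0 : ∀ j, e j ≠ 0) (he1 : ∀ j, 1 - e j ≠ 0) :
    Lm' m β e * Lm m β e = 1 := by
  calc Lm' m β e * Lm m β e = Lm m β e * Lm' m β e := diag_comm _ _
    _ = 1 := LmLm' m β e he0 he1

end Mat

lemma sandwich_apply {n : Type*} [Fintype n] [DecidableEq n] (d d' l : n → ℝ)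
    (A B : Matrix n n ℝ) (J K : n) :
    (Matrix.diagonal d * A * Matrix.diagonal l * B * Matrix.diagonal d') J K
      = d J * (∑ U, A J U * l U * B U K) * d' K := by
  rw [Matrix.mul_diagonal, Matrix.mul_apply]
  simp only [Matrix.mul_diagonal, Matrix.diagonal_mul]
  rw [show (∑ U, d J * A J U * l U * B U K) = d J * ∑ U, A J U * l U * B U K from by
    rw [Finset.mul_sum]; exact Finset.sum_congr rfl fun _ _ => by ring]

open Matrix in
lemma Sigma_factor (m β : ℕ) (e : Fin m → ℝ) (he0 : ∀ j, e j ≠ 0) :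
    SigmaB m β e = De m β e * Zm m β * Lm m β e * (Zm m β)ᵀ * De m β e := by
  ext J K
  unfold De Lm
  rw [sandwich_apply]
  simp only [SigmaB, Zm, Matrix.of_apply, Matrix.transpose_apply]
  have hsum : (∑ U : IdxSet m β,
      (if U.1 ⊆ J.1 then (1:ℝ) else 0) * (∏ l ∈ U.1, (1 - e l) / e l)
        * (if U.1 ⊆ K.1 then 1 else 0))
      = ∑ U ∈ (J.1 ∩ K.1).powerset,
        (if U ⊆ J.1 then (1:ℝ) else 0) * (∏ l ∈ U, (1 - e l) / e l)
          * (if U ⊆ K.1 then 1 else 0) := by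
    refine sum_idx (J.1 ∩ K.1)
      (le_trans (Finset.card_le_card Finset.inter_subset_left) J.2)
      (fun U => (if U ⊆ J.1 then (1:ℝ) else 0) * (∏ l ∈ U, (1 - e l) / e l)
          * (if U ⊆ K.1 then 1 else 0)) ?_
    intro U hU
    by_cases h1 : U ⊆ J.1
    · have h2 : ¬ U ⊆ K.1 := fun h2 => hU (Finset.subset_inter h1 h2)
      simp only [if_neg h2, mul_zero]
    · simp only [if_neg h1, zero_mul]
  rw [hsum, Finset.sum_congr rfl (fun U hU => by
    have h := Finset.mem_powerset.1 hU
    rw [if_pos (h.trans Finset.inter_subset_left),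
      if_pos (h.trans Finset.inter_subset_right), one_mul, mul_one])]
  have hps : ∏ l ∈ J.1 ∩ K.1, ((1 - e l) / e l + 1)
      = ∑ U ∈ (J.1 ∩ K.1).powerset, ∏ l ∈ U, ((1 - e l) / e l) := by
    rw [Finset.prod_add]
    exact Finset.sum_congr rfl fun t _ => by rw [Finset.prod_const_one, mul_one]
  rw [← hps,
    Finset.prod_congr rfl (fun l _ => show (1 - e l) / e l + 1 = (e l)⁻¹ by
      have := he0 l; field_simp; ring),
    Finset.prod_inv_distrib]
  have hui := Finset.prod_union_inter (s₁ := J.1) (s₂ := K.1) (f := e)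
  have hne : (∏ l ∈ J.1 ∩ K.1, e l) ≠ 0 := Finset.prod_ne_zero_iff.2 fun l _ => he0 l
  field_simp
  linear_combination hui

open Matrix in
lemma T_factor (m β : ℕ) (e : Fin m → ℝ) :
    TB m β e = Ds m β e * (Zm m β)ᵀ * Lm' m β e * Zm m β * Ds m β e := by
  ext J K
  unfold Ds Lm'
  rw [sandwich_apply]
  simp only [TB, Zm, Matrix.of_apply, Matrix.transpose_apply]
  have : (∑ U : IdxSet m β,
      if (J.1 ∪ K.1) ⊆ U.1 then (∏ ℓ ∈ U.1, e ℓ / (1 - e ℓ)) else 0)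
      = ∑ U : IdxSet m β, (if J.1 ⊆ U.1 then (1:ℝ) else 0)
          * (∏ ℓ ∈ U.1, e ℓ / (1 - e ℓ)) * (if K.1 ⊆ U.1 then 1 else 0) := by
    refine Finset.sum_congr rfl fun U _ => ?_
    by_cases h1 : J.1 ⊆ U.1 <;> by_cases h2 : K.1 ⊆ U.1 <;>
      simp [h1, h2, Finset.union_subset_iff]
  rw [this]
  ring

open Matrix in
/-- **Lemma C.1: explicit inverse of the interaction second-moment matrix (polynomial case).**
For every `m ≥ 1`, `1 ≤ β ≤ m` and `e ∈ (0,1)^m`, the matrix `Σ_β(e)` is invertible with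
inverse `T_β(e)`. -/
theorem sigmaB_inverse
    (m β : ℕ) (hm : 1 ≤ m) (hβ₁ : 1 ≤ β) (hβ₂ : β ≤ m)
    (e : Fin m → ℝ) (he : ∀ j, 0 < e j ∧ e j < 1) :
    SigmaB m β e * TB m β e = 1 ∧ TB m β e * SigmaB m β e = 1 := by
  have he0 : ∀ j, e j ≠ 0 := fun j => ne_of_gt (he j).1
  have he1 : ∀ j, 1 - e j ≠ 0 := fun j => ne_of_gt (by linarith [(he j).2])
  have hZM := ZM_mul m β
  have hMZ := MZ_mul m β
  have hMeq := Mm_eq m β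
  have hSS := Smat_sq m β
  have hDeDs := DeDs m β e he0
  have hDsDe := DsDe m β e he0
  have hLL' := LmLm' m β e he0 he1
  have hL'L := Lm'Lm m β e he0 he1
  have hSt : (Smat m β)ᵀ = Smat m β := Matrix.diagonal_transpose _
  have hZS : Zm m β * Smat m β = Smat m β * Mm m β := by
    rw [hMeq]
    simp only [← mul_assoc]
    rw [hSS, one_mul]
  have hMt : (Mm m β)ᵀ = Smat m β * ((Zm m β)ᵀ * Smat m β) := by
    rw [hMeq, Matrix.transpose_mul, Matrix.transpose_mul, hSt]
  have hZtS : (Zm m β)ᵀ * Smat m β = Smat m β * (Mm m β)ᵀ := by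
    rw [hMt]
    simp only [← mul_assoc]
    rw [hSS, one_mul]
  have hMtZt : (Mm m β)ᵀ * (Zm m β)ᵀ = 1 := by
    rw [← Matrix.transpose_mul, hZM, Matrix.transpose_one]
  have hLS : Lm m β e * Smat m β = Smat m β * Lm m β e := diag_comm _ _
  have hL'S : Lm' m β e * Smat m β = Smat m β * Lm' m β e := diag_comm _ _
  have w1 : ∀ X, De m β e * (Ds m β e * X) = Smat m β * X := fun X => by
    rw [← mul_assoc, hDeDs]
  have w1' : ∀ X, Ds m β e * (De m β e * X) = Smat m β * X := fun X => by
    rw [← mul_assoc, hDsDe]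
  have w2 : ∀ X, (Zm m β)ᵀ * (Smat m β * X) = Smat m β * ((Mm m β)ᵀ * X) := fun X => by
    rw [← mul_assoc, hZtS, mul_assoc]
  have w3 : ∀ X, (Mm m β)ᵀ * ((Zm m β)ᵀ * X) = X := fun X => by
    rw [← mul_assoc, hMtZt, one_mul]
  have w4 : ∀ X, Lm m β e * (Smat m β * X) = Smat m β * (Lm m β e * X) := fun X => by
    rw [← mul_assoc, hLS, mul_assoc]
  have w4' : ∀ X, Lm' m β e * (Smat m β * X) = Smat m β * (Lm' m β e * X) := fun X => by
    rw [← mul_assoc, hL'S, mul_assoc]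
  have w5 : ∀ X, Lm m β e * (Lm' m β e * X) = X := fun X => by
    rw [← mul_assoc, hLL', one_mul]
  have w5' : ∀ X, Lm' m β e * (Lm m β e * X) = X := fun X => by
    rw [← mul_assoc, hL'L, one_mul]
  have w6 : ∀ X, Zm m β * (Smat m β * X) = Smat m β * (Mm m β * X) := fun X => by
    rw [← mul_assoc, hZS, mul_assoc]
  have w7 : ∀ X, Mm m β * (Zm m β * X) = X := fun X => by
    rw [← mul_assoc, hMZ, one_mul]
  have fin1 : De m β e * (Smat m β * Ds m β e) = 1 := by
    rw [show Smat m β * Ds m β e = Ds m β e * Smat m β from diag_comm _ _,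
      ← mul_assoc, hDeDs, hSS]
  have fin2 : Ds m β e * (Smat m β * De m β e) = 1 := by
    rw [show Smat m β * De m β e = De m β e * Smat m β from diag_comm _ _,
      ← mul_assoc, hDsDe, hSS]
  constructor
  · rw [Sigma_factor m β e he0, T_factor m β e]
    simp only [mul_assoc]
    rw [w1, w2, w3, w4, w5, w6, w7, fin1]
  · rw [Sigma_factor m β e he0, T_factor m β e]
    simp only [mul_assoc]
    rw [w1', w6, w7, w4', w5', w2, w3, fin2]
end

section
/- Appendix C weight identity (explicit form of the polynomial additive IPW weight). For every m ≥ 1, every 1 ≤ β ≤ m, every e ∈ (0,1)^m, and all a, p ∈ {0,1}^m, one has φ_β(p)^T T_β(e) φ_β(a) = Σ_{U ∈ I_β} ∏_{ℓ∈U} ( 1{a_ℓ = p_ℓ}/e_ℓ(p_ℓ) − 1 ). -/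
open Finset

/-- For `e ∈ (0,1)` and a binary value `a`, `eOf e a = e` if `a = 1` (`true`) and
`eOf e a = 1 − e` if `a = 0` (`false`). -/
noncomputable def eOf (e : ℝ) (a : Bool) : ℝ := if a then e else 1 - e

/-- The interaction feature vector `φ_β(a)` with entries `φ_β(a)_S = ∏_{j∈S} a_j`. -/
noncomputable def phiB (m β : ℕ) (a : Fin m → Bool) : IdxSet m β → ℝ :=
  fun S => ∏ j ∈ S.1, (if a j then (1 : ℝ) else 0)

lemma sum_if_subset (m β : ℕ) (U : IdxSet m β) (c : Fin m → ℝ) :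
    ∑ J : IdxSet m β, (if J.1 ⊆ U.1 then ∏ j ∈ J.1, c j else 0)
      = ∏ j ∈ U.1, (1 + c j) := by
  classical
  have h := Finset.sum_subtype
    ((Finset.univ : Finset (Finset (Fin m))).filter fun S => S.card ≤ β)
    (p := fun S => S.card ≤ β) (F := Subtype.fintype _)
    (by intro x; simp)
    (fun S => if S ⊆ U.1 then ∏ j ∈ S, c j else 0)
  rw [show (∑ J : IdxSet m β, (if J.1 ⊆ U.1 then ∏ j ∈ J.1, c j else 0))
      = ∑ J : {S : Finset (Fin m) // S.card ≤ β}, (if J.1 ⊆ U.1 then ∏ j ∈ J.1, c j else 0) from rfl,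
    ← h, ← Finset.sum_filter]
  have hset : (((Finset.univ : Finset (Finset (Fin m))).filter fun S => S.card ≤ β).filter
      fun S => S ⊆ U.1) = U.1.powerset := by
    ext S
    simp only [Finset.mem_filter, Finset.mem_univ, true_and, Finset.mem_powerset]
    exact ⟨fun ⟨_, h2⟩ => h2, fun h2 => ⟨(Finset.card_le_card h2).trans U.2, h2⟩⟩
  rw [hset]
  have := Finset.prod_add c (fun _ => (1:ℝ)) U.1
  simp only [Finset.prod_const_one, mul_one] at this
  rw [show (∏ j ∈ U.1, (1 + c j)) = ∏ j ∈ U.1, (c j + 1) by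
    exact Finset.prod_congr rfl fun j _ => add_comm _ _, this]

lemma pointwise_id (e : ℝ) (h0 : 0 < e) (h1 : e < 1) (aℓ pℓ : Bool) :
    (1 + (if pℓ then (1:ℝ) else 0) * (-1 / e)) * (1 + (if aℓ then (1:ℝ) else 0) * (-1 / e))
        * (e / (1 - e))
      = (if aℓ = pℓ then (1 : ℝ) else 0) / eOf e pℓ - 1 := by
  have he : e ≠ 0 := ne_of_gt h0
  have h1e : (1 : ℝ) - e ≠ 0 := sub_ne_zero.2 (ne_of_lt h1).symm
  cases aℓ <;> cases pℓ <;> simp [eOf] <;> field_simp <;> ring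

/-- **Appendix C weight identity: explicit form of the polynomial additive IPW weight.**
For every `m ≥ 1`, `1 ≤ β ≤ m`, `e ∈ (0,1)^m`, and all `a, p ∈ {0,1}^m`,
`φ_β(p)ᵀ T_β(e) φ_β(a) = Σ_{U ∈ I_β} ∏_{ℓ∈U} (1{a_ℓ = p_ℓ}/e_ℓ(p_ℓ) − 1)`. -/
theorem polynomial_weight_identity
    (m β : ℕ) (hm : 1 ≤ m) (hβ₁ : 1 ≤ β) (hβ₂ : β ≤ m)
    (e : Fin m → ℝ) (he : ∀ j, 0 < e j ∧ e j < 1)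
    (a p : Fin m → Bool) :
    ∑ J : IdxSet m β, ∑ K : IdxSet m β,
        phiB m β p J * TB m β e J K * phiB m β a K
      = ∑ U : IdxSet m β,
          ∏ ℓ ∈ U.1, ((if a ℓ = p ℓ then (1 : ℝ) else 0) / eOf (e ℓ) (p ℓ) - 1) := by
  classical
  set cp : Fin m → ℝ := fun j => (if p j then (1:ℝ) else 0) * (-1 / e j) with hcp
  set ca : Fin m → ℝ := fun j => (if a j then (1:ℝ) else 0) * (-1 / e j) with hca
  have step1 : ∀ J K : IdxSet m β,
      phiB m β p J * TB m β e J K * phiB m β a K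
        = ∑ U : IdxSet m β,
            (if J.1 ⊆ U.1 then ∏ j ∈ J.1, cp j else 0)
              * ((if K.1 ⊆ U.1 then ∏ k ∈ K.1, ca k else 0)
                 * ∏ ℓ ∈ U.1, e ℓ / (1 - e ℓ)) := by
    intro J K
    simp only [phiB, TB, Matrix.of_apply]
    rw [show (∏ j ∈ J.1, (if p j then (1:ℝ) else 0)) *
        ((∏ j ∈ J.1, (-1 / e j)) * (∏ k ∈ K.1, (-1 / e k)) *
          ∑ U : IdxSet m β, if J.1 ∪ K.1 ⊆ U.1 then ∏ ℓ ∈ U.1, e ℓ / (1 - e ℓ) else 0) *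
        (∏ k ∈ K.1, (if a k then (1:ℝ) else 0))
      = ((∏ j ∈ J.1, cp j) * (∏ k ∈ K.1, ca k)) *
          ∑ U : IdxSet m β, if J.1 ∪ K.1 ⊆ U.1 then ∏ ℓ ∈ U.1, e ℓ / (1 - e ℓ) else 0 by
        simp only [hcp, hca, Finset.prod_mul_distrib]; ring]
    rw [Finset.mul_sum]
    refine Finset.sum_congr rfl fun U _ => ?_
    by_cases hJ : J.1 ⊆ U.1 <;> by_cases hK : K.1 ⊆ U.1 <;>
      simp [Finset.union_subset_iff, hJ, hK] <;> ring
  calc ∑ J : IdxSet m β, ∑ K : IdxSet m β,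
        phiB m β p J * TB m β e J K * phiB m β a K
      = ∑ J : IdxSet m β, ∑ K : IdxSet m β, ∑ U : IdxSet m β,
            (if J.1 ⊆ U.1 then ∏ j ∈ J.1, cp j else 0)
              * ((if K.1 ⊆ U.1 then ∏ k ∈ K.1, ca k else 0)
                 * ∏ ℓ ∈ U.1, e ℓ / (1 - e ℓ)) := by
        exact Finset.sum_congr rfl fun J _ => Finset.sum_congr rfl fun K _ => step1 J K
    _ = ∑ U : IdxSet m β, ∑ J : IdxSet m β, ∑ K : IdxSet m β,
            (if J.1 ⊆ U.1 then ∏ j ∈ J.1, cp j else 0)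
              * ((if K.1 ⊆ U.1 then ∏ k ∈ K.1, ca k else 0)
                 * ∏ ℓ ∈ U.1, e ℓ / (1 - e ℓ)) := by
        rw [show (∑ J : IdxSet m β, ∑ K : IdxSet m β, ∑ U : IdxSet m β,
            (if J.1 ⊆ U.1 then ∏ j ∈ J.1, cp j else 0)
              * ((if K.1 ⊆ U.1 then ∏ k ∈ K.1, ca k else 0)
                 * ∏ ℓ ∈ U.1, e ℓ / (1 - e ℓ)))
          = ∑ J : IdxSet m β, ∑ U : IdxSet m β, ∑ K : IdxSet m β,
            (if J.1 ⊆ U.1 then ∏ j ∈ J.1, cp j else 0)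
              * ((if K.1 ⊆ U.1 then ∏ k ∈ K.1, ca k else 0)
                 * ∏ ℓ ∈ U.1, e ℓ / (1 - e ℓ))
          from Finset.sum_congr rfl fun J _ => Finset.sum_comm]
        exact Finset.sum_comm
    _ = ∑ U : IdxSet m β,
          (∑ J : IdxSet m β, if J.1 ⊆ U.1 then ∏ j ∈ J.1, cp j else 0)
            * ((∑ K : IdxSet m β, if K.1 ⊆ U.1 then ∏ k ∈ K.1, ca k else 0)
               * ∏ ℓ ∈ U.1, e ℓ / (1 - e ℓ)) := by
        refine Finset.sum_congr rfl fun U _ => ?_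
        rw [Finset.sum_mul]
        refine Finset.sum_congr rfl fun J _ => ?_
        rw [Finset.sum_mul, Finset.mul_sum]
    _ = ∑ U : IdxSet m β,
          ∏ ℓ ∈ U.1, ((if a ℓ = p ℓ then (1 : ℝ) else 0) / eOf (e ℓ) (p ℓ) - 1) := by
        refine Finset.sum_congr rfl fun U _ => ?_
        rw [sum_if_subset, sum_if_subset, ← mul_assoc, ← Finset.prod_mul_distrib,
          ← Finset.prod_mul_distrib]
        exact Finset.prod_congr rfl fun ℓ _ =>
          pointwise_id (e ℓ) (he ℓ).1 (he ℓ).2 (a ℓ) (p ℓ)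
end

section
/- Equivalence of the additive IPW weight and the per-cluster least-squares form (derivation of Equation (5) from Equation (11)). For every m ∈ ℕ, every e ∈ (0,1)^m, and all a, p ∈ {0,1}^m, writing φ(a) = (1, a_1, …, a_m) ∈ ℝ^{m+1}, one has φ(p)^T T(e) φ(a) = W(a, p, e). -/
open Finset

/-- The additive IPW weight `W(a, p, e) = Σ_j (1{a_j = p_j}/e_j(p_j) − 1) + 1`. -/
noncomputable def addW (m : ℕ) (a p : Fin m → Bool) (e : Fin m → ℝ) : ℝ :=
  (∑ j : Fin m, ((if a j = p j then (1 : ℝ) else 0) / eOf (e j) (p j) - 1)) + 1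

/-- The explicit matrix `T(e)` of Equation (9), indexed by `Option (Fin m)` where `none`
is the intercept coordinate `0` and `some j` is coordinate `j`. -/
noncomputable def TMat (m : ℕ) (e : Fin m → ℝ) :
    Matrix (Option (Fin m)) (Option (Fin m)) ℝ :=
  Matrix.of fun i j =>
    match i, j with
    | none, none => 1 + ∑ k : Fin m, e k / (1 - e k)
    | none, some k => -(1 / (1 - e k))
    | some j', none => -(1 / (1 - e j'))
    | some j', some k => if j' = k then 1 / (e j' * (1 - e j')) else 0

/-- The feature vector `φ(a) = (1, a₁, …, a_m) ∈ ℝ^{m+1}`. -/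
noncomputable def phiVec (m : ℕ) (a : Fin m → Bool) : Option (Fin m) → ℝ :=
  fun i => match i with
  | none => 1
  | some j => if a j then 1 else 0

/-- **Equivalence of the additive IPW weight and the per-cluster least-squares form
(derivation of Equation (5) from Equation (11)).**  For all `m`, `e ∈ (0,1)^m` and
`a, p ∈ {0,1}^m`, one has `φ(p)ᵀ T(e) φ(a) = W(a, p, e)`. -/
theorem phi_T_phi_eq_addW
    (m : ℕ) (e : Fin m → ℝ) (he : ∀ j, 0 < e j ∧ e j < 1)
    (a p : Fin m → Bool) :
    ∑ i : Option (Fin m), ∑ k : Option (Fin m),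
        phiVec m p i * TMat m e i k * phiVec m a k
      = addW m a p e := by
  classical
  simp only [Fintype.sum_option, phiVec, TMat, Matrix.of_apply, addW]
  have key : ∀ j : Fin m,
      (e j / (1 - e j)
        + (1 * -(1 / (1 - e j)) * if a j then 1 else 0))
        + (((if p j then 1 else 0) * -(1 / (1 - e j)) * 1)
          + (if p j then (1:ℝ) else 0) * (1 / (e j * (1 - e j))) * (if a j then 1 else 0))
      = (if a j = p j then (1 : ℝ) else 0) / eOf (e j) (p j) - 1 := by
    intro j
    obtain ⟨h0, h1⟩ := he j
    have hne : e j ≠ 0 := ne_of_gt h0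
    have hne1 : (1 : ℝ) - e j ≠ 0 := by linarith
    cases hb : a j <;> cases hc : p j <;>
      simp [eOf] <;> field_simp <;> ring
  -- transform the sum over some-rows
  have hrow : ∀ j : Fin m,
      ∑ k : Fin m, (if p j then (1:ℝ) else 0)
          * (if j = k then 1 / (e j * (1 - e j)) else 0) * (if a k then 1 else 0)
      = (if p j then (1:ℝ) else 0) * (1 / (e j * (1 - e j))) * (if a j then 1 else 0) := by
    intro j
    rw [Finset.sum_eq_single j]
    · simp
    · intro k _ hk; simp [if_neg (Ne.symm hk)]
    · simp
  calc
    (1 * (1 + ∑ k : Fin m, e k / (1 - e k)) * 1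
        + ∑ k : Fin m, 1 * -(1 / (1 - e k)) * (if a k then 1 else 0))
      + ∑ j : Fin m, ((if p j then (1:ℝ) else 0) * -(1 / (1 - e j)) * 1
        + ∑ k : Fin m, (if p j then (1:ℝ) else 0)
            * (if j = k then 1 / (e j * (1 - e j)) else 0) * (if a k then 1 else 0))
    = (∑ j : Fin m, (((e j / (1 - e j)
          + 1 * -(1 / (1 - e j)) * (if a j then 1 else 0))
        + (((if p j then (1:ℝ) else 0) * -(1 / (1 - e j)) * 1)
          + (if p j then (1:ℝ) else 0) * (1 / (e j * (1 - e j))) * (if a j then 1 else 0))))) + 1 := by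
        simp only [hrow, Finset.sum_add_distrib]
        ring
    _ = (∑ j : Fin m, ((if a j = p j then (1 : ℝ) else 0) / eOf (e j) (p j) - 1)) + 1 := by
        rw [Finset.sum_congr rfl fun j _ => key j]
end

section
/- Identification of the policy value under the additive outcome model (Equation (7)). Under the cluster model with fixed cluster size m, the factored propensity score assumption, the heterogeneous additive outcome model, consistency, and unconfoundedness, for every measurable policy assignment p : 𝒳 → {0,1}^m one has E[ (1/m) Σ_{j=1}^m Y_j(p(X)) ] = E[ (1/m) Σ_{j=1}^m ( g_j^{(0)}(X) + Σ_{k=1}^m g_j^{(k)}(X) p_k(X) ) ]. -/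
open MeasureTheory ProbabilityTheory Finset
open scoped ENNReal NNReal
open Filter

lemma condexp_mul_indicator_of_condIndepFun
    {Ω γ δ : Type*} {m' : MeasurableSpace Ω} {mΩ : MeasurableSpace Ω} [StandardBorelSpace Ω]
    {mγ : MeasurableSpace γ} {mδ : MeasurableSpace δ} [MeasurableSingletonClass δ]
    [DecidableEq δ]
    {μ : Measure Ω} [IsProbabilityMeasure μ]
    (hm' : m' ≤ mΩ)
    {W : Ω → γ} (hW : Measurable W) {A : Ω → δ} (hA : Measurable A)
    (hWA : CondIndepFun m' hm' W A μ)
    {φ : γ → ℝ} (hφ : Measurable φ) (hint : Integrable (fun ω => φ (W ω)) μ) (a : δ) :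
    μ[(fun ω => φ (W ω) * (if A ω = a then (1:ℝ) else 0)) | m']
      =ᵐ[μ] fun ω => (μ[(fun ω => φ (W ω)) | m']) ω
        * (μ[(fun ω => if A ω = a then (1:ℝ) else 0) | m']) ω := by
  set t : Set Ω := A ⁻¹' {a} with ht_def
  have ht : MeasurableSet t := hA (measurableSet_singleton a)
  have hind : (fun ω => if A ω = a then (1:ℝ) else 0)
      = t.indicator (fun _ => (1:ℝ)) := by
    funext ω
    by_cases h : A ω = a <;> simp [Set.indicator_apply, ht_def, Set.mem_preimage, h]
  set c : Ω → ℝ := μ[t.indicator (fun _ => (1:ℝ)) | m'] with hc_def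
  have hind_int : Integrable (t.indicator (fun _ => (1:ℝ))) μ :=
    (integrable_const (1:ℝ)).indicator ht
  have hc_sm : StronglyMeasurable[m'] c := stronglyMeasurable_condExp
  have hc_meas : Measurable c := (hc_sm.mono hm').measurable
  have hc_int : Integrable c μ := integrable_condExp
  have hc_nonneg : ∀ᵐ ω ∂μ, 0 ≤ c ω :=
    condExp_nonneg (Eventually.of_forall fun ω =>
      Set.indicator_nonneg (fun _ _ => zero_le_one) ω)
  have hc_le_one : ∀ᵐ ω ∂μ, c ω ≤ 1 := by
    have h1 : (t.indicator (fun _ => (1:ℝ))) ≤ᵐ[μ] fun _ => (1:ℝ) :=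
      Eventually.of_forall fun ω => Set.indicator_le_self' (fun _ _ => zero_le_one) ω
    have h2 := condExp_mono (μ := μ) (m := m') hind_int (integrable_const 1) h1
    rw [condExp_const hm'] at h2
    exact h2
  have hc_bound : ∀ᵐ ω ∂μ, ‖c ω‖ ≤ 1 := by
    filter_upwards [hc_nonneg, hc_le_one] with ω h0 h1
    rwa [Real.norm_eq_abs, abs_of_nonneg h0]
  -- pull-out helper
  have pullout : ∀ (f : Ω → ℝ), Integrable f μ →
      ∀ s : Set Ω, MeasurableSet[m'] s →
        ∫ ω in s, (μ[f|m']) ω * c ω ∂μ = ∫ ω in s, c ω * f ω ∂μ := by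
    intro f hf s hs
    have h1 : μ[(fun ω => c ω * f ω)|m'] =ᵐ[μ] fun ω => c ω * (μ[f|m']) ω :=
      condExp_stronglyMeasurable_mul_of_bound hm' hc_sm hf 1 hc_bound
    have hcf_int : Integrable (fun ω => c ω * f ω) μ :=
      hf.bdd_mul hc_meas.aestronglyMeasurable hc_bound
    calc ∫ ω in s, (μ[f|m']) ω * c ω ∂μ
        = ∫ ω in s, c ω * (μ[f|m']) ω ∂μ := by simp_rw [mul_comm]
      _ = ∫ ω in s, (μ[(fun ω => c ω * f ω)|m']) ω ∂μ := by
          refine (setIntegral_congr_ae (hm' s hs) ?_).symm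
          filter_upwards [h1] with ω hω _ using hω
      _ = ∫ ω in s, c ω * f ω ∂μ := setIntegral_condExp hm' hcf_int hs
  -- basic identity from conditional independence
  have base : ∀ u : Set γ, MeasurableSet u → ∀ s : Set Ω, MeasurableSet[m'] s →
      (μ (s ∩ (W ⁻¹' u ∩ t))).toReal = ∫ ω in s ∩ W ⁻¹' u, c ω ∂μ := by
    intro u hu s hs
    have hkey := (condIndepFun_iff_condExp_inter_preimage_eq_mul hW hA).mp hWA u {a} hu
      (measurableSet_singleton a)
    have hWu : MeasurableSet (W ⁻¹' u) := hW hu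
    have hint1 : Integrable ((W ⁻¹' u ∩ t).indicator (fun _ => (1:ℝ))) μ :=
      (integrable_const 1).indicator (hWu.inter ht)
    have hint2 : Integrable ((W ⁻¹' u).indicator (fun _ => (1:ℝ))) μ :=
      (integrable_const 1).indicator hWu
    have lhs1 : ∫ ω in s, (μ⟦W ⁻¹' u ∩ t | m'⟧) ω ∂μ = (μ (s ∩ (W ⁻¹' u ∩ t))).toReal := by
      rw [setIntegral_condExp hm' hint1 hs, setIntegral_indicator (hWu.inter ht),
        setIntegral_const, smul_eq_mul, mul_one, measureReal_def]
    have rhs1 : ∫ ω in s, (μ⟦W ⁻¹' u | m'⟧) ω * c ω ∂μ = ∫ ω in s ∩ W ⁻¹' u, c ω ∂μ := by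
      rw [pullout _ hint2 s hs]
      have : ∀ ω, c ω * (W ⁻¹' u).indicator (fun _ => (1:ℝ)) ω
          = (W ⁻¹' u).indicator c ω := by
        intro ω
        by_cases hω : ω ∈ W ⁻¹' u <;> simp [Set.indicator_apply, hω]
      simp_rw [this]
      rw [setIntegral_indicator hWu]
    rw [← lhs1, ← rhs1]
    refine setIntegral_congr_ae (hm' s hs) ?_
    filter_upwards [hkey] with ω hω _ using hω
  -- the main set-integral identity
  have claim : ∀ s : Set Ω, MeasurableSet[m'] s →
      ∫ ω in s, φ (W ω) * t.indicator (fun _ => (1:ℝ)) ω ∂μ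
        = ∫ ω in s, c ω * φ (W ω) ∂μ := by
    intro s hs
    have hs' : MeasurableSet s := hm' s hs
    set ρ₁ : Measure Ω := μ.restrict (s ∩ t) with hρ₁
    set ρ₂ : Measure Ω := (μ.restrict s).withDensity (fun ω => ENNReal.ofReal (c ω)) with hρ₂
    have hmap : Measure.map W ρ₁ = Measure.map W ρ₂ := by
      ext u hu
      rw [Measure.map_apply hW hu, Measure.map_apply hW hu, hρ₁, hρ₂,
        Measure.restrict_apply (hW hu), withDensity_apply _ (hW hu),
        Measure.restrict_restrict (hW hu)]
      have h1 : ∫⁻ ω in W ⁻¹' u ∩ s, ENNReal.ofReal (c ω) ∂μ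
          = ENNReal.ofReal (∫ ω in W ⁻¹' u ∩ s, c ω ∂μ) :=
        (ofReal_integral_eq_lintegral_ofReal hc_int.integrableOn
          (ae_restrict_of_ae hc_nonneg)).symm
      rw [h1, Set.inter_comm (W ⁻¹' u) s, ← base u hu s hs,
        ENNReal.ofReal_toReal (measure_ne_top μ _), Set.inter_left_comm]
    have step1 : ∫ ω in s, φ (W ω) * t.indicator (fun _ => (1:ℝ)) ω ∂μ
        = ∫ ω, φ (W ω) ∂ρ₁ := by
      have : ∀ ω, φ (W ω) * t.indicator (fun _ => (1:ℝ)) ω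
          = t.indicator (fun ω => φ (W ω)) ω := by
        intro ω
        by_cases hω : ω ∈ t <;> simp [Set.indicator_apply, hω]
      simp_rw [this]
      rw [setIntegral_indicator ht, hρ₁]
    have step2 : ∫ ω, φ (W ω) ∂ρ₂ = ∫ ω in s, c ω * φ (W ω) ∂μ := by
      have hden : (fun ω => ENNReal.ofReal (c ω))
          = fun ω => ((c ω).toNNReal : ℝ≥0∞) := rfl
      rw [hρ₂, hden, integral_withDensity_eq_integral_smul hc_meas.real_toNNReal]
      refine integral_congr_ae ?_
      filter_upwards [ae_restrict_of_ae hc_nonneg] with ω h0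
      rw [NNReal.smul_def, Real.coe_toNNReal _ h0, smul_eq_mul]
    have stepm : ∫ ω, φ (W ω) ∂ρ₁ = ∫ ω, φ (W ω) ∂ρ₂ := by
      rw [← integral_map hW.aemeasurable hφ.aestronglyMeasurable,
        ← integral_map hW.aemeasurable hφ.aestronglyMeasurable, hmap]
    rw [step1, stepm, step2]
  -- assemble
  have hind' : ∀ ω, (if A ω = a then (1:ℝ) else 0) = t.indicator (fun _ => (1:ℝ)) ω := by
    intro ω
    by_cases h : A ω = a <;> simp [Set.indicator_apply, ht_def, Set.mem_preimage, h]
  simp only [hind']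
  set f : Ω → ℝ := fun ω => φ (W ω) * t.indicator (fun _ => (1:ℝ)) ω with hf_def
  set gfun : Ω → ℝ := fun ω => (μ[(fun ω => φ (W ω))|m']) ω * c ω with hg_def
  have hf_int : Integrable f μ := by
    refine Integrable.mono' hint.norm
      (hint.1.mul ((measurable_one.indicator ht).aestronglyMeasurable)) ?_
    refine Eventually.of_forall fun ω => ?_
    rw [hf_def]
    by_cases hω : ω ∈ t <;>
      simp [Set.indicator_apply, hω, abs_nonneg]
  have hg_int : Integrable gfun μ := by
    refine Integrable.mono'
      (integrable_condExp (f := fun ω => φ (W ω)) (m := m') (μ := μ)).norm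
      (((((stronglyMeasurable_condExp
          (f := fun ω => φ (W ω)) (m := m') (μ := μ)).mono hm').aestronglyMeasurable).mul
        hc_meas.aestronglyMeasurable)) ?_
    filter_upwards [hc_bound] with ω hω
    rw [hg_def]
    calc ‖(μ[(fun ω => φ (W ω))|m']) ω * c ω‖
        = ‖(μ[(fun ω => φ (W ω))|m']) ω‖ * ‖c ω‖ := norm_mul _ _
      _ ≤ ‖(μ[(fun ω => φ (W ω))|m']) ω‖ * 1 :=
          mul_le_mul_of_nonneg_left hω (norm_nonneg _)
      _ = ‖(μ[(fun ω => φ (W ω))|m']) ω‖ := mul_one _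
  refine (ae_eq_condExp_of_forall_setIntegral_eq hm' hf_int
    (fun s hs _ => hg_int.integrableOn) (fun s hs _ => ?_)
    ((stronglyMeasurable_condExp.mul stronglyMeasurable_condExp).aestronglyMeasurable)).symm
  calc ∫ ω in s, gfun ω ∂μ
      = ∫ ω in s, c ω * φ (W ω) ∂μ := pullout _ hint s hs
    _ = ∫ ω in s, f ω ∂μ := (claim s hs).symm


/-- **Identification of the policy value under the additive outcome model (Equation (7)).**
Under the cluster model with fixed cluster size `m`, the factored propensity score
assumption, the heterogeneous additive outcome model, consistency, and unconfoundedness,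
for every measurable policy assignment `p : 𝒳 → {0,1}^m`,
`E[(1/m) Σ_j Y_j(p(X))] = E[(1/m) Σ_j (g_j^{(0)}(X) + Σ_k g_j^{(k)}(X) p_k(X))]`.
The coefficient index `Option (Fin m)` uses `none` for the intercept index `k = 0`
and `some k` for `1 ≤ k ≤ m`; `eOf e a` denotes `e` if `a = 1` and `1 − e` if `a = 0`. -/
theorem policy_value_identification
    {Ω : Type*} [MeasurableSpace Ω] [StandardBorelSpace Ω] [Nonempty Ω]
    (μ : Measure Ω) [IsProbabilityMeasure μ]
    {𝒳 : Type*} [MeasurableSpace 𝒳]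
    (m : ℕ) (hm : 1 ≤ m)
    (X : Ω → 𝒳) (hX : Measurable X)
    (A : Ω → Fin m → Bool) (hA : Measurable A)
    (Y : Ω → Fin m → ℝ) (hY : Measurable Y)
    (hYint : ∀ j, Integrable (fun ω => Y ω j) μ)
    (e : Fin m → 𝒳 → ℝ) (he_meas : ∀ j, Measurable (e j))
    (he : ∀ j x, 0 < e j x ∧ e j x < 1)
    -- factored propensity score: P(A = a | X) = ∏_j P(A_j = a_j | X) = ∏_j e_j(X)(a_j)
    (hfac : ∀ a : Fin m → Bool,
      μ[(fun ω => if A ω = a then (1 : ℝ) else 0) | MeasurableSpace.comap X inferInstance]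
        =ᵐ[μ] fun ω => ∏ j : Fin m,
          (if a j then e j (X ω) else 1 - e j (X ω)))
    -- heterogeneous additive outcome model
    (g : Fin m → Option (Fin m) → 𝒳 → ℝ)
    (hg_meas : ∀ j k, Measurable (g j k))
    (hg_bdd : ∃ C, ∀ j k x, |g j k x| ≤ C)
    (hadd : ∀ j : Fin m,
      μ[(fun ω => Y ω j) | MeasurableSpace.comap (fun ω => (A ω, X ω)) inferInstance]
        =ᵐ[μ] fun ω => g j none (X ω)
          + ∑ k : Fin m, g j (some k) (X ω) * (if A ω k then (1 : ℝ) else 0))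
    -- potential outcomes, consistency and unconfoundedness
    (Ypot : (Fin m → Bool) → Ω → Fin m → ℝ)
    (hYpot_meas : ∀ a, Measurable (Ypot a))
    (hYpot_int : ∀ a j, Integrable (fun ω => Ypot a ω j) μ)
    (hconsistency : ∀ᵐ ω ∂μ, Y ω = Ypot (A ω) ω)
    (hunconf : CondIndepFun (MeasurableSpace.comap X inferInstance) hX.comap_le
      (fun ω => fun a : Fin m → Bool => Ypot a ω) A μ)
    -- policy assignment
    (p : 𝒳 → Fin m → Bool) (hp : Measurable p) :
    ∫ ω, (1 : ℝ) / m * ∑ j : Fin m, Ypot (p (X ω)) ω j ∂μ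
      = ∫ ω, (1 : ℝ) / m * ∑ j : Fin m,
          (g j none (X ω)
            + ∑ k : Fin m, g j (some k) (X ω) * (if p (X ω) k then (1 : ℝ) else 0)) ∂μ := by
  obtain ⟨C, hC⟩ := hg_bdd
  have hC0 : 0 ≤ C := le_trans (abs_nonneg _) (hC ⟨0, hm⟩ none (X (Classical.arbitrary Ω)))
  -- notation
  set hw : 𝒳 → (Fin m → Bool) → Fin m → ℝ :=
    fun x a j => g j none x + ∑ k : Fin m, g j (some k) x * (if a k then (1:ℝ) else 0)
    with hw_def
  have hw_meas : ∀ (a : Fin m → Bool) (j : Fin m), Measurable (fun x => hw x a j) := by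
    intro a j
    refine (hg_meas j none).add (Finset.measurable_sum _ fun k _ => ?_)
    exact (hg_meas j (some k)).mul measurable_const
  have hw_bdd : ∀ (x) (a : Fin m → Bool) (j : Fin m), |hw x a j| ≤ C + m * C := by
    intro x a j
    have hterm : ∀ k : Fin m, |g j (some k) x * (if a k then (1:ℝ) else 0)| ≤ C := by
      intro k
      by_cases h : a k
      · simpa [h] using hC j (some k) x
      · simpa [h] using hC0
    calc |hw x a j| ≤ |g j none x|
          + |∑ k : Fin m, g j (some k) x * (if a k then (1:ℝ) else 0)| := abs_add_le _ _
      _ ≤ C + ∑ k : Fin m, |g j (some k) x * (if a k then (1:ℝ) else 0)| := by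
          gcongr
          · exact hC j none x
          · exact Finset.abs_sum_le_sum_abs _ _
      _ ≤ C + ∑ _k : Fin m, C := by gcongr with k _hk; exact hterm k
      _ = C + m * C := by simp [Finset.sum_const, mul_comm]
  -- measurability of X for the comap σ-algebra
  have hXm' : Measurable[MeasurableSpace.comap X inferInstance] X := fun s hs => ⟨s, hs, rfl⟩
  have hm'le : MeasurableSpace.comap X inferInstance ≤ ‹MeasurableSpace Ω› := hX.comap_le
  have hm₂le : MeasurableSpace.comap (fun ω => (A ω, X ω)) inferInstance
      ≤ ‹MeasurableSpace Ω› := (hA.prodMk hX).comap_le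
  have htow : MeasurableSpace.comap X inferInstance
      ≤ MeasurableSpace.comap (fun ω => (A ω, X ω)) inferInstance := by
    intro s hs
    obtain ⟨u, hu, rfl⟩ := hs
    exact ⟨(Set.univ : Set (Fin m → Bool)) ×ˢ u, MeasurableSet.univ.prod hu,
      by ext ω; simp [Set.mem_prod]⟩
  -- the key identification step
  have key : ∀ (j : Fin m) (a : Fin m → Bool),
      μ[(fun ω => Ypot a ω j) | MeasurableSpace.comap X inferInstance]
        =ᵐ[μ] fun ω => hw (X ω) a j := by
    intro j a
    set I : Ω → ℝ := fun ω => if A ω = a then (1:ℝ) else 0 with hI_def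
    have hWmeas : Measurable (fun ω => fun a' : Fin m → Bool => Ypot a' ω) :=
      measurable_pi_lambda _ fun a' => hYpot_meas a'
    have hφ : Measurable (fun w : (Fin m → Bool) → Fin m → ℝ => w a j) :=
      (measurable_pi_apply j).comp (measurable_pi_apply a)
    have E1 := condexp_mul_indicator_of_condIndepFun hX.comap_le hWmeas hA hunconf hφ
      (hYpot_int a j) a
    -- sets for the pull-out at the (A, X) level
    set S : Set Ω := (fun ω => (A ω, X ω)) ⁻¹' ({a} ×ˢ (Set.univ : Set 𝒳)) with hS_def
    have hS : MeasurableSet[MeasurableSpace.comap (fun ω => (A ω, X ω)) inferInstance] S :=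
      ⟨{a} ×ˢ (Set.univ : Set 𝒳), (measurableSet_singleton a).prod MeasurableSet.univ, rfl⟩
    have hI_eq : I = S.indicator (fun _ => (1:ℝ)) := by
      funext ω
      have hmem : ω ∈ S ↔ A ω = a := by
        simp [hS_def, Set.mem_preimage, Set.mem_prod, eq_comm]
      by_cases h : A ω = a <;> simp [hI_def, Set.indicator_apply, hmem, h]
    have hI_sm₂ : StronglyMeasurable[MeasurableSpace.comap
        (fun ω => (A ω, X ω)) inferInstance] I := by
      rw [hI_eq]; exact stronglyMeasurable_const.indicator hS
    have hI_bound : ∀ᵐ ω ∂μ, ‖I ω‖ ≤ 1 := by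
      refine Filter.Eventually.of_forall fun ω => ?_
      by_cases h : A ω = a <;> simp [hI_def, h]
    have hI_int : Integrable I μ := by
      rw [hI_eq]
      exact (integrable_const (1:ℝ)).indicator (hm₂le S hS)
    have E4a := condExp_stronglyMeasurable_mul_of_bound hm₂le hI_sm₂ (hYint j) 1 hI_bound
    have E4b : (I * μ[(fun ω => Y ω j) | MeasurableSpace.comap
          (fun ω => (A ω, X ω)) inferInstance])
        =ᵐ[μ] fun ω => I ω * hw (X ω) a j := by
      filter_upwards [hadd j] with ω hω
      rw [Pi.mul_apply, hω]
      by_cases h : A ω = a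
      · subst h; rfl
      · simp [hI_def, h]
    have E4 : μ[(fun ω => I ω * Y ω j) | MeasurableSpace.comap
          (fun ω => (A ω, X ω)) inferInstance]
        =ᵐ[μ] fun ω => I ω * hw (X ω) a j := E4a.trans E4b
    have tower : μ[(fun ω => I ω * Y ω j) | MeasurableSpace.comap X inferInstance]
        =ᵐ[μ] μ[μ[(fun ω => I ω * Y ω j) | MeasurableSpace.comap
            (fun ω => (A ω, X ω)) inferInstance] | MeasurableSpace.comap X inferInstance] :=
      (condExp_condExp_of_le htow hm₂le).symm
    have E5a : μ[μ[(fun ω => I ω * Y ω j) | MeasurableSpace.comap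
            (fun ω => (A ω, X ω)) inferInstance] | MeasurableSpace.comap X inferInstance]
        =ᵐ[μ] μ[(fun ω => I ω * hw (X ω) a j) | MeasurableSpace.comap X inferInstance] :=
      condExp_congr_ae E4
    have hhw_sm : StronglyMeasurable[MeasurableSpace.comap X inferInstance]
        (fun ω => hw (X ω) a j) := ((hw_meas a j).comp hXm').stronglyMeasurable
    have hhw_bound : ∀ᵐ ω ∂μ, ‖hw (X ω) a j‖ ≤ C + m * C :=
      Filter.Eventually.of_forall fun ω => by
        rw [Real.norm_eq_abs]; exact hw_bdd (X ω) a j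
    have E5b := condExp_stronglyMeasurable_mul_of_bound hm'le hhw_sm hI_int
      (C + m * C) hhw_bound
    -- E5b : μ[(fun ω => hw (X ω) a j) * I|m'] =ᵐ (fun ω => hw (X ω) a j) * μ[I|m']
    have E2 : (fun ω => Ypot a ω j * I ω) =ᵐ[μ] fun ω => I ω * Y ω j := by
      filter_upwards [hconsistency] with ω hω
      by_cases h : A ω = a
      · simp only [hI_def, if_pos h, mul_one, one_mul]
        rw [hω, h]
      · simp [hI_def, h]
    have E5c : μ[(fun ω => I ω * hw (X ω) a j) | MeasurableSpace.comap X inferInstance]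
        =ᵐ[μ] μ[(fun ω => hw (X ω) a j * I ω) | MeasurableSpace.comap X inferInstance] :=
      condExp_congr_ae (Filter.Eventually.of_forall fun ω => mul_comm _ _)
    have chain : (fun ω => (μ[(fun ω => Ypot a ω j) | MeasurableSpace.comap X inferInstance]) ω
          * (μ[I | MeasurableSpace.comap X inferInstance]) ω)
        =ᵐ[μ] fun ω => hw (X ω) a j
          * (μ[I | MeasurableSpace.comap X inferInstance]) ω :=
      E1.symm.trans <| (condExp_congr_ae E2).trans <| tower.trans <| E5a.trans <|
        E5c.trans E5b
    have hπ := hfac a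
    have hπpos : ∀ ω, (0:ℝ) < ∏ k : Fin m, (if a k then e k (X ω) else 1 - e k (X ω)) := by
      intro ω
      refine Finset.prod_pos fun k _ => ?_
      by_cases h : a k
      · simpa [h] using (he k (X ω)).1
      · simpa [h] using sub_pos.2 (he k (X ω)).2
    filter_upwards [chain, hπ] with ω hchain hπω
    have := hchain
    rw [hπω] at this
    exact mul_right_cancel₀ (ne_of_gt (hπpos ω)) this
  -- integrability facts
  have hwint : ∀ (a : Fin m → Bool) (j : Fin m),
      Integrable (fun ω => hw (X ω) a j) μ := by
    intro a j
    refine Integrable.mono' (integrable_const (C + m * C))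
      (((hw_meas a j).comp hX).aestronglyMeasurable) ?_
    exact Filter.Eventually.of_forall fun ω => by
      rw [Real.norm_eq_abs]; exact hw_bdd (X ω) a j
  set B : (Fin m → Bool) → Set Ω := fun a => (fun ω => p (X ω)) ⁻¹' {a} with hB_def
  have hBmeas : ∀ a, MeasurableSet (B a) := fun a =>
    (hp.comp hX) (measurableSet_singleton a)
  have hBm' : ∀ a, MeasurableSet[MeasurableSpace.comap X inferInstance] (B a) := fun a =>
    ⟨p ⁻¹' {a}, hp (measurableSet_singleton a), rfl⟩
  have repr : ∀ (j : Fin m) (F : (Fin m → Bool) → Ω → ℝ) (ω : Ω),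
      F (p (X ω)) ω = ∑ a : Fin m → Bool, (B a).indicator (F a) ω := by
    intro j F ω
    have : ∀ a : Fin m → Bool, (B a).indicator (F a) ω
        = if p (X ω) = a then F a ω else 0 := by
      intro a
      by_cases h : p (X ω) = a <;>
        simp [hB_def, Set.indicator_apply, Set.mem_preimage, h]
    simp_rw [this]
    rw [Finset.sum_ite_eq]
    simp
  have intLHS : ∀ j : Fin m, Integrable (fun ω => Ypot (p (X ω)) ω j) μ := by
    intro j
    have : (fun ω => Ypot (p (X ω)) ω j)
        = fun ω => ∑ a : Fin m → Bool, (B a).indicator (fun ω => Ypot a ω j) ω := by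
      funext ω; exact repr j (fun a ω => Ypot a ω j) ω
    rw [this]
    exact integrable_finset_sum _ fun a _ => (hYpot_int a j).indicator (hBmeas a)
  have intRHS : ∀ j : Fin m, Integrable (fun ω => hw (X ω) (p (X ω)) j) μ := by
    intro j
    have : (fun ω => hw (X ω) (p (X ω)) j)
        = fun ω => ∑ a : Fin m → Bool, (B a).indicator (fun ω => hw (X ω) a j) ω := by
      funext ω; exact repr j (fun a ω => hw (X ω) a j) ω
    rw [this]
    exact integrable_finset_sum _ fun a _ => (hwint a j).indicator (hBmeas a)
  -- per-coordinate integral identity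
  have intj : ∀ j : Fin m,
      ∫ ω, Ypot (p (X ω)) ω j ∂μ = ∫ ω, hw (X ω) (p (X ω)) j ∂μ := by
    intro j
    have h1 : (fun ω => Ypot (p (X ω)) ω j)
        = fun ω => ∑ a : Fin m → Bool, (B a).indicator (fun ω => Ypot a ω j) ω := by
      funext ω; exact repr j (fun a ω => Ypot a ω j) ω
    have h2 : (fun ω => hw (X ω) (p (X ω)) j)
        = fun ω => ∑ a : Fin m → Bool, (B a).indicator (fun ω => hw (X ω) a j) ω := by
      funext ω; exact repr j (fun a ω => hw (X ω) a j) ω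
    rw [h1, h2, integral_finset_sum _ fun a _ => (hYpot_int a j).indicator (hBmeas a),
      integral_finset_sum _ fun a _ => (hwint a j).indicator (hBmeas a)]
    refine Finset.sum_congr rfl fun a _ => ?_
    rw [integral_indicator (hBmeas a), integral_indicator (hBmeas a),
      ← setIntegral_condExp hm'le (hYpot_int a j) (hBm' a)]
    refine setIntegral_congr_ae (hBmeas a) ?_
    filter_upwards [key j a] with ω hω _ using hω
  -- final assembly
  calc ∫ ω, (1 : ℝ) / m * ∑ j : Fin m, Ypot (p (X ω)) ω j ∂μ
      = (1:ℝ)/m * ∫ ω, ∑ j : Fin m, Ypot (p (X ω)) ω j ∂μ := integral_const_mul _ _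
    _ = (1:ℝ)/m * ∑ j : Fin m, ∫ ω, Ypot (p (X ω)) ω j ∂μ := by
        rw [integral_finset_sum _ fun j _ => intLHS j]
    _ = (1:ℝ)/m * ∑ j : Fin m, ∫ ω, hw (X ω) (p (X ω)) j ∂μ := by
        refine congrArg _ (Finset.sum_congr rfl fun j _ => intj j)
    _ = (1:ℝ)/m * ∫ ω, ∑ j : Fin m, hw (X ω) (p (X ω)) j ∂μ := by
        rw [integral_finset_sum _ fun j _ => intRHS j]
    _ = ∫ ω, (1 : ℝ) / m * ∑ j : Fin m, hw (X ω) (p (X ω)) j ∂μ :=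
        (integral_const_mul _ _).symm
end

section
/- Variance identity for the doubly robust policy value score (the computation concluding the proof of Theorem 2, fixed cluster size). Under the cluster model with fixed cluster size m, the factored propensity score assumption, and the additive outcome model E[Y | A, X] = G(X) φ(A) almost surely, assume all relevant random variables are square-integrable and assume homoskedasticity: E[ (w^T (Y − G(X) φ(A)))² | A, X ] = σ² almost surely for a constant σ² ≥ 0, where w = (1/m, …, 1/m) ∈ ℝ^m. Then for every measurable policy assignment p : 𝒳 → {0,1}^m, the real random variable Z = w^T [ G(X) + (Y − G(X) φ(A)) φ(A)^T T(e(X)) ] φ(p(X)) satisfies Var(Z) = Var( w^T G(X) φ(p(X)) ) + σ² E[ φ(p(X))^T T(e(X)) φ(p(X)) ]. -/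
open MeasureTheory ProbabilityTheory Finset

/-- The doubly robust policy value score at one observation:
`Z = wᵀ [ G + (y − G φ(a)) φ(a)ᵀ T(e) ] φ(p)` with uniform weights `w = (1/m,…,1/m)`. -/
noncomputable def drZ (m : ℕ) (Gx : Fin m → Option (Fin m) → ℝ) (y : Fin m → ℝ)
    (a pb : Fin m → Bool) (ev : Fin m → ℝ) : ℝ :=
  ∑ j : Fin m, (1 / m : ℝ) *
    ∑ k : Option (Fin m),
      (Gx j k
        + (y j - ∑ l : Option (Fin m), Gx j l * phiVec m a l) *
            ∑ l : Option (Fin m), phiVec m a l * TMat m ev l k) * phiVec m pb k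

noncomputable def MMat (m : ℕ) (e : Fin m → ℝ) :
    Matrix (Option (Fin m)) (Option (Fin m)) ℝ :=
  Matrix.of fun i j =>
    match i, j with
    | none, none => 1
    | none, some k => e k
    | some j', none => e j'
    | some j', some k => if j' = k then e j' else e j' * e k

lemma sum_pi_bool (m : ℕ) (g : Fin m → Bool → ℝ) :
    ∑ a : Fin m → Bool, ∏ j : Fin m, g j (a j) = ∏ j : Fin m, (g j false + g j true) := by
  classical
  rw [← Fintype.piFinset_univ, ← Finset.prod_univ_sum]
  congr 1
  ext j
  simp [Fintype.sum_bool, add_comm]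

lemma prod_ind (m : ℕ) (a : Fin m → Bool) (i : Fin m) :
    (if a i then (1:ℝ) else 0) = ∏ j : Fin m, (if j = i then (if a j then (1:ℝ) else 0) else 1) := by
  rw [Finset.prod_ite_eq' Finset.univ i fun j => (if a j then (1:ℝ) else 0)]
  simp

lemma sum_eOf_phi_phi (m : ℕ) (e : Fin m → ℝ) (l k : Option (Fin m)) :
    ∑ a : Fin m → Bool, (∏ j : Fin m, eOf (e j) (a j)) * (phiVec m a l * phiVec m a k)
      = MMat m e l k := by
  classical
  match l, k with
  | none, none =>
    simp only [phiVec, mul_one]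
    rw [sum_pi_bool]
    simp [eOf, MMat]
  | none, some i =>
    simp only [phiVec, one_mul]
    have h1 : ∀ a : Fin m → Bool,
        (∏ j : Fin m, eOf (e j) (a j)) * (if a i then (1:ℝ) else 0)
          = ∏ j : Fin m, (eOf (e j) (a j) * if j = i then (if a j then (1:ℝ) else 0) else 1) := by
      intro a; rw [Finset.prod_mul_distrib, ← prod_ind]
    rw [Finset.sum_congr rfl fun a _ => h1 a,
      sum_pi_bool m (fun j b => eOf (e j) b * if j = i then (if b then (1:ℝ) else 0) else 1)]
    have h2 : ∀ j : Fin m, (eOf (e j) false * if j = i then (if (false:Bool) then (1:ℝ) else 0) else 1)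
        + (eOf (e j) true * if j = i then (if (true:Bool) then (1:ℝ) else 0) else 1)
        = if j = i then e j else 1 := by
      intro j; by_cases h : j = i <;> simp [h, eOf]
    rw [Finset.prod_congr rfl fun j _ => h2 j, Finset.prod_ite_eq' Finset.univ i e]
    simp [MMat]
  | some i, none =>
    simp only [phiVec, mul_one]
    have h1 : ∀ a : Fin m → Bool,
        (∏ j : Fin m, eOf (e j) (a j)) * (if a i then (1:ℝ) else 0)
          = ∏ j : Fin m, (eOf (e j) (a j) * if j = i then (if a j then (1:ℝ) else 0) else 1) := by
      intro a; rw [Finset.prod_mul_distrib, ← prod_ind]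
    rw [Finset.sum_congr rfl fun a _ => h1 a,
      sum_pi_bool m (fun j b => eOf (e j) b * if j = i then (if b then (1:ℝ) else 0) else 1)]
    have h2 : ∀ j : Fin m, (eOf (e j) false * if j = i then (if (false:Bool) then (1:ℝ) else 0) else 1)
        + (eOf (e j) true * if j = i then (if (true:Bool) then (1:ℝ) else 0) else 1)
        = if j = i then e j else 1 := by
      intro j; by_cases h : j = i <;> simp [h, eOf]
    rw [Finset.prod_congr rfl fun j _ => h2 j, Finset.prod_ite_eq' Finset.univ i e]
    simp [MMat]
  | some i, some i' =>
    by_cases hii : i = i'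
    · subst hii
      have hsq : ∀ a : Fin m → Bool,
          phiVec m a (some i) * phiVec m a (some i) = if a i then (1:ℝ) else 0 := by
        intro a; by_cases h : a i <;> simp [phiVec, h]
      simp only [hsq]
      have h1 : ∀ a : Fin m → Bool,
          (∏ j : Fin m, eOf (e j) (a j)) * (if a i then (1:ℝ) else 0)
            = ∏ j : Fin m, (eOf (e j) (a j) * if j = i then (if a j then (1:ℝ) else 0) else 1) := by
        intro a; rw [Finset.prod_mul_distrib, ← prod_ind]
      rw [Finset.sum_congr rfl fun a _ => h1 a,
        sum_pi_bool m (fun j b => eOf (e j) b * if j = i then (if b then (1:ℝ) else 0) else 1)]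
      have h2 : ∀ j : Fin m, (eOf (e j) false * if j = i then (if (false:Bool) then (1:ℝ) else 0) else 1)
          + (eOf (e j) true * if j = i then (if (true:Bool) then (1:ℝ) else 0) else 1)
          = if j = i then e j else 1 := by
        intro j; by_cases h : j = i <;> simp [h, eOf]
      rw [Finset.prod_congr rfl fun j _ => h2 j, Finset.prod_ite_eq' Finset.univ i e]
      simp [MMat]
    · have h1 : ∀ a : Fin m → Bool,
          (∏ j : Fin m, eOf (e j) (a j)) * (phiVec m a (some i) * phiVec m a (some i'))
            = ∏ j : Fin m, (eOf (e j) (a j)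
                * ((if j = i then (if a j then (1:ℝ) else 0) else 1)
                  * (if j = i' then (if a j then (1:ℝ) else 0) else 1))) := by
        intro a
        simp only [Finset.prod_mul_distrib, ← prod_ind]
        simp [phiVec]
      rw [Finset.sum_congr rfl fun a _ => h1 a,
        sum_pi_bool m (fun j b => eOf (e j) b * ((if j = i then (if b then (1:ℝ) else 0) else 1)
          * (if j = i' then (if b then (1:ℝ) else 0) else 1)))]
      have h2 : ∀ j : Fin m,
          (eOf (e j) false * ((if j = i then (if (false:Bool) then (1:ℝ) else 0) else 1)
              * (if j = i' then (if (false:Bool) then (1:ℝ) else 0) else 1)))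
          + (eOf (e j) true * ((if j = i then (if (true:Bool) then (1:ℝ) else 0) else 1)
              * (if j = i' then (if (true:Bool) then (1:ℝ) else 0) else 1)))
          = (if j = i then e j else 1) * (if j = i' then e j else 1) := by
        intro j
        by_cases h : j = i
        · subst h; simp [eOf, hii]
        · have hii' : ¬ i' = i := fun hh => hii hh.symm
          by_cases h' : j = i' <;> simp [h, h', eOf, hii']
      rw [Finset.prod_congr rfl fun j _ => h2 j, Finset.prod_mul_distrib,
        Finset.prod_ite_eq' Finset.univ i e, Finset.prod_ite_eq' Finset.univ i' e]
      simp [MMat, hii]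

lemma TMat_symm (m : ℕ) (e : Fin m → ℝ) : Matrix.transpose (TMat m e) = TMat m e := by
  ext i j
  match i, j with
  | none, none => rfl
  | none, some k => rfl
  | some j', none => rfl
  | some j', some k =>
    simp only [Matrix.transpose_apply, TMat, Matrix.of_apply]
    by_cases h : j' = k
    · subst h; simp
    · simp [h, Ne.symm h]

lemma MMat_symm (m : ℕ) (e : Fin m → ℝ) : Matrix.transpose (MMat m e) = MMat m e := by
  ext i j
  match i, j with
  | none, none => rfl
  | none, some k => rfl
  | some j', none => rfl
  | some j', some k =>
    simp only [Matrix.transpose_apply, MMat, Matrix.of_apply]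
    by_cases h : j' = k
    · subst h; simp
    · simp [h, Ne.symm h, mul_comm]

lemma TMat_mul_MMat (m : ℕ) (e : Fin m → ℝ) (he : ∀ j, 0 < e j ∧ e j < 1) :
    TMat m e * MMat m e = 1 := by
  classical
  have h0 : ∀ j, e j ≠ 0 := fun j => ne_of_gt (he j).1
  have h1 : ∀ j, (1:ℝ) - e j ≠ 0 := fun j => sub_ne_zero.mpr (ne_of_gt (he j).2)
  ext i j
  rw [Matrix.mul_apply, Fintype.sum_option]
  match i, j with
  | none, none =>
    simp only [TMat, MMat, Matrix.of_apply, Matrix.one_apply_eq, mul_one]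
    have : ∀ k : Fin m, -(1 / (1 - e k)) * e k = -(e k / (1 - e k)) := by
      intro k; field_simp
    rw [Finset.sum_congr rfl fun k _ => this k, Finset.sum_neg_distrib]
    ring
  | none, some j =>
    simp only [TMat, MMat, Matrix.of_apply]
    have hone : (1 : Matrix (Option (Fin m)) (Option (Fin m)) ℝ) none (some j) = 0 := by
      simp [Matrix.one_apply]
    rw [hone]
    have hterm : ∀ k : Fin m,
        -(1 / (1 - e k)) * (if k = j then e k else e k * e j)
          = -(e j * (e k / (1 - e k))) + (if k = j then -(e j) else 0) := by
      intro k
      by_cases h : k = j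
      · subst h; simp only [eq_self_iff_true, if_true]; field_simp [h0 k, h1 k]; ring
      · simp only [if_neg h]; field_simp [h0 k, h1 k]; ring
    rw [Finset.sum_congr rfl fun k _ => hterm k, Finset.sum_add_distrib,
      Finset.sum_ite_eq' Finset.univ j fun _ => -(e j), Finset.sum_neg_distrib,
      ← Finset.mul_sum]
    simp only [Finset.mem_univ, if_pos]
    ring
  | some i, none =>
    simp only [TMat, MMat, Matrix.of_apply]
    have hone : (1 : Matrix (Option (Fin m)) (Option (Fin m)) ℝ) (some i) none = 0 := by
      simp [Matrix.one_apply]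
    rw [hone]
    have hterm : ∀ k : Fin m,
        (if i = k then 1 / (e i * (1 - e i)) else 0) * e k
          = if k = i then 1 / (1 - e i) else 0 := by
      intro k
      by_cases h : k = i
      · subst h; simp only [eq_self_iff_true, if_true]; field_simp [h0 k, h1 k]
      · simp [h, Ne.symm h]
    rw [Finset.sum_congr rfl fun k _ => hterm k,
      Finset.sum_ite_eq' Finset.univ i fun _ => 1 / (1 - e i)]
    simp only [Finset.mem_univ, if_pos, mul_one]
    field_simp [h0 i, h1 i]
    ring
  | some i, some j =>
    simp only [TMat, MMat, Matrix.of_apply]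
    have hterm : ∀ k : Fin m,
        (if i = k then 1 / (e i * (1 - e i)) else 0) * (if k = j then e k else e k * e j)
          = if k = i then (if i = j then 1 / (1 - e i) else e j / (1 - e i)) else 0 := by
      intro k
      by_cases h : k = i
      · subst h
        simp only [eq_self_iff_true, if_true]
        by_cases h2 : k = j
        · subst h2; simp only [eq_self_iff_true, if_true]; field_simp [h0 k, h1 k]
        · simp only [if_neg h2, eq_self_iff_true, if_true]; field_simp [h0 k, h1 k]
      · simp [h, Ne.symm h]
    rw [Finset.sum_congr rfl fun k _ => hterm k,
      Finset.sum_ite_eq' Finset.univ i fun _ => (if i = j then 1 / (1 - e i) else e j / (1 - e i))]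
    simp only [Finset.mem_univ, if_pos]
    by_cases h : i = j
    · subst h
      simp only [eq_self_iff_true, if_true, Matrix.one_apply_eq]
      field_simp [h1 i]
      ring
    · have : (1 : Matrix (Option (Fin m)) (Option (Fin m)) ℝ) (some i) (some j) = 0 := by
        simp [Matrix.one_apply, h]
      rw [this, if_neg h]
      field_simp [h1 i]
      ring


lemma quad_main (m : ℕ) (e : Fin m → ℝ) (he : ∀ j, 0 < e j ∧ e j < 1)
    (u : Option (Fin m) → ℝ) :
    ∑ a : Fin m → Bool, (∏ j : Fin m, eOf (e j) (a j)) *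
        (∑ k : Option (Fin m), (∑ l : Option (Fin m), phiVec m a l * TMat m e l k) * u k) ^ 2
      = ∑ k : Option (Fin m), ∑ l : Option (Fin m), u k * TMat m e k l * u l := by
  classical
  set c : Option (Fin m) → ℝ := fun l => ∑ k : Option (Fin m), TMat m e l k * u k with hc
  have hcv : c = (TMat m e).mulVec u := by
    funext l; simp [Matrix.mulVec, dotProduct, hc]
  have hMT : MMat m e * TMat m e = 1 := mul_eq_one_comm.mp (TMat_mul_MMat m e he)
  have hMc : ∀ l, (∑ l' : Option (Fin m), MMat m e l l' * c l') = u l := by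
    intro l
    have h : (MMat m e).mulVec c = u := by
      rw [hcv, Matrix.mulVec_mulVec, hMT, Matrix.one_mulVec]
    have h2 := congrFun h l
    simpa [Matrix.mulVec, dotProduct] using h2
  have hinner : ∀ a : Fin m → Bool,
      (∑ k : Option (Fin m), (∑ l : Option (Fin m), phiVec m a l * TMat m e l k) * u k)
        = ∑ l : Option (Fin m), phiVec m a l * c l := by
    intro a
    calc ∑ k : Option (Fin m), (∑ l : Option (Fin m), phiVec m a l * TMat m e l k) * u k
        = ∑ k : Option (Fin m), ∑ l : Option (Fin m), phiVec m a l * TMat m e l k * u k := by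
          refine Finset.sum_congr rfl fun k _ => ?_; rw [Finset.sum_mul]
      _ = ∑ l : Option (Fin m), ∑ k : Option (Fin m), phiVec m a l * TMat m e l k * u k :=
          Finset.sum_comm
      _ = ∑ l : Option (Fin m), phiVec m a l * c l := by
          refine Finset.sum_congr rfl fun l _ => ?_
          rw [hc, Finset.mul_sum]
          exact Finset.sum_congr rfl fun k _ => by ring
  calc ∑ a : Fin m → Bool, (∏ j : Fin m, eOf (e j) (a j)) *
        (∑ k : Option (Fin m), (∑ l : Option (Fin m), phiVec m a l * TMat m e l k) * u k) ^ 2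
      = ∑ a : Fin m → Bool, ∑ l : Option (Fin m), ∑ l' : Option (Fin m),
          ((∏ j : Fin m, eOf (e j) (a j)) * (phiVec m a l * phiVec m a l')) * (c l * c l') := by
        refine Finset.sum_congr rfl fun a _ => ?_
        rw [hinner a, sq, Finset.sum_mul_sum, Finset.mul_sum]
        refine Finset.sum_congr rfl fun l _ => ?_
        rw [Finset.mul_sum]
        exact Finset.sum_congr rfl fun l' _ => by ring
    _ = ∑ l : Option (Fin m), ∑ l' : Option (Fin m),
          (∑ a : Fin m → Bool, (∏ j : Fin m, eOf (e j) (a j)) * (phiVec m a l * phiVec m a l'))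
            * (c l * c l') := by
        rw [Finset.sum_comm]
        refine Finset.sum_congr rfl fun l _ => ?_
        rw [Finset.sum_comm]
        refine Finset.sum_congr rfl fun l' _ => ?_
        exact (Finset.sum_mul _ _ _).symm
    _ = ∑ l : Option (Fin m), ∑ l' : Option (Fin m), MMat m e l l' * (c l * c l') := by
        refine Finset.sum_congr rfl fun l _ => Finset.sum_congr rfl fun l' _ => ?_
        rw [sum_eOf_phi_phi]
    _ = ∑ l : Option (Fin m), c l * u l := by
        refine Finset.sum_congr rfl fun l _ => ?_
        rw [← hMc l, Finset.mul_sum]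
        exact Finset.sum_congr rfl fun l' _ => by ring
    _ = ∑ k : Option (Fin m), ∑ l : Option (Fin m), u k * TMat m e k l * u l := by
        refine Finset.sum_congr rfl fun k _ => ?_
        rw [hc, Finset.sum_mul]
        exact Finset.sum_congr rfl fun l _ => by ring


section helpers
variable {α : Type*} [MeasurableSpace α]

lemma measurable_phiVec {m : ℕ} {b : α → Fin m → Bool} (hb : Measurable b)
    (k : Option (Fin m)) : Measurable fun x => phiVec m (b x) k := by
  match k with
  | none => exact measurable_const
  | some i =>
    have h1 : Measurable fun x => b x i := (measurable_pi_apply i).comp hb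
    exact (measurable_from_top (f := fun v : Bool => if v then (1:ℝ) else 0)).comp h1

lemma measurable_TMatEntry {m : ℕ} {ev : α → Fin m → ℝ}
    (hev : ∀ i, Measurable fun x => ev x i) (l k : Option (Fin m)) :
    Measurable fun x => TMat m (ev x) l k := by
  match l, k with
  | none, none =>
    exact measurable_const.add
      (Finset.measurable_sum _ fun i _ => (hev i).div (measurable_const.sub (hev i)))
  | none, some k =>
    exact (measurable_const.div (measurable_const.sub (hev k))).neg
  | some j, none =>
    exact (measurable_const.div (measurable_const.sub (hev j))).neg
  | some j, some k =>
    by_cases h : j = k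
    · simp only [TMat, Matrix.of_apply, if_pos h]
      exact measurable_const.div ((hev j).mul (measurable_const.sub (hev j)))
    · simp only [TMat, Matrix.of_apply, if_neg h]
      exact measurable_const

lemma memLp_two_mul_integrable' {α : Type*} {mα : MeasurableSpace α} {μ : Measure α} [IsFiniteMeasure μ] {f g : α → ℝ}
    (hf : MemLp f 2 μ) (hg : MemLp g 2 μ) : Integrable (fun x => f x * g x) μ := by
  have h : MemLp (f • g) 1 μ := MemLp.smul (φ := f) hg hf (hpqr := ⟨by simp only [one_div, inv_one]; exact ENNReal.inv_two_add_inv_two⟩)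
  exact (h.integrable le_rfl).congr (ae_of_all _ fun x => by simp [smul_eq_mul])

end helpers

/-- **Variance identity for the doubly robust policy value score (proof of Theorem 2,
fixed cluster size).**  Under the cluster model with fixed cluster size `m`, the factored
propensity score assumption, the additive outcome model `E[Y | A, X] = G(X) φ(A)` a.s.,
square-integrability of the relevant random variables, and homoskedasticity
`E[(wᵀ(Y − G(X)φ(A)))² | A, X] = σ²` a.s., the score
`Z = wᵀ[G(X) + (Y − G(X)φ(A))φ(A)ᵀ T(e(X))] φ(p(X))` satisfies
`Var(Z) = Var(wᵀ G(X) φ(p(X))) + σ² E[φ(p(X))ᵀ T(e(X)) φ(p(X))]`. -/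
theorem DR_variance_identity
    {Ω : Type*} [MeasurableSpace Ω]
    (μ : Measure Ω) [IsProbabilityMeasure μ]
    {𝒳 : Type*} [MeasurableSpace 𝒳]
    (m : ℕ) (hm : 1 ≤ m)
    (X : Ω → 𝒳) (hX : Measurable X)
    (A : Ω → Fin m → Bool) (hA : Measurable A)
    (Y : Ω → Fin m → ℝ) (hY : Measurable Y)
    (hYint : ∀ j, Integrable (fun ω => Y ω j) μ)
    (hY2 : ∀ j, MemLp (fun ω => Y ω j) 2 μ)
    (e : Fin m → 𝒳 → ℝ) (he_meas : ∀ j, Measurable (e j))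
    (he : ∀ j x, 0 < e j x ∧ e j x < 1)
    -- factored propensity score: P(A = a | X) = ∏_j P(A_j = a_j | X) = ∏_j e_j(X)(a_j)
    (hfac : ∀ a : Fin m → Bool,
      μ[(fun ω => if A ω = a then (1 : ℝ) else 0) | MeasurableSpace.comap X inferInstance]
        =ᵐ[μ] fun ω => ∏ j : Fin m, eOf (e j (X ω)) (a j))
    -- additive outcome model, matrix form:  E[Y | A, X] = G(X) φ(A)
    (G : Fin m → Option (Fin m) → 𝒳 → ℝ)
    (hG_meas : ∀ j k, Measurable (G j k))
    (hG_bdd : ∃ C, ∀ j k x, |G j k x| ≤ C)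
    (hadd : ∀ j : Fin m,
      μ[(fun ω => Y ω j) | MeasurableSpace.comap (fun ω => (A ω, X ω)) inferInstance]
        =ᵐ[μ] fun ω => ∑ l : Option (Fin m), G j l (X ω) * phiVec m (A ω) l)
    -- policy assignment
    (p : 𝒳 → Fin m → Bool) (hp : Measurable p)
    -- square-integrability of the relevant random variables
    (hZ2 : MemLp (fun ω =>
        drZ m (fun j k => G j k (X ω)) (Y ω) (A ω) (p (X ω)) (fun i => e i (X ω))) 2 μ)
    (hW2 : MemLp (fun ω => ∑ j : Fin m, (1 / m : ℝ) *
        ∑ k : Option (Fin m), G j k (X ω) * phiVec m (p (X ω)) k) 2 μ)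
    (hQint : Integrable (fun ω => ∑ k : Option (Fin m), ∑ l : Option (Fin m),
        phiVec m (p (X ω)) k * TMat m (fun i => e i (X ω)) k l * phiVec m (p (X ω)) l) μ)
    -- homoskedasticity:  E[(wᵀ(Y − G(X)φ(A)))² | A, X] = σ²  a.s.
    (σ2 : ℝ) (hσ2 : 0 ≤ σ2)
    (hhomo :
      μ[(fun ω => (∑ j : Fin m, (1 / m : ℝ) *
          (Y ω j - ∑ l : Option (Fin m), G j l (X ω) * phiVec m (A ω) l)) ^ 2)
        | MeasurableSpace.comap (fun ω => (A ω, X ω)) inferInstance]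
        =ᵐ[μ] fun _ => σ2) :
    variance (fun ω =>
        drZ m (fun j k => G j k (X ω)) (Y ω) (A ω) (p (X ω)) (fun i => e i (X ω))) μ
      = variance (fun ω => ∑ j : Fin m, (1 / m : ℝ) *
            ∑ k : Option (Fin m), G j k (X ω) * phiVec m (p (X ω)) k) μ
        + σ2 * ∫ ω, ∑ k : Option (Fin m), ∑ l : Option (Fin m),
            phiVec m (p (X ω)) k * TMat m (fun i => e i (X ω)) k l *
              phiVec m (p (X ω)) l ∂μ := by
  classical
  obtain ⟨C, hC⟩ := hG_bdd
  -- σ-algebras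
  have hAX : Measurable fun ω => (A ω, X ω) := hA.prodMk hX
  have hmAX_le : MeasurableSpace.comap (fun ω => (A ω, X ω)) inferInstance
      ≤ (inferInstance : MeasurableSpace Ω) := hAX.comap_le
  have hmX_le : MeasurableSpace.comap X inferInstance
      ≤ (inferInstance : MeasurableSpace Ω) := hX.comap_le
  have hmX_le_mAX : MeasurableSpace.comap X inferInstance
      ≤ MeasurableSpace.comap (fun ω => (A ω, X ω)) inferInstance := by
    have hXeq : X = Prod.snd ∘ (fun ω => (A ω, X ω)) := rfl
    calc MeasurableSpace.comap X inferInstance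
        = MeasurableSpace.comap (fun ω => (A ω, X ω))
            (MeasurableSpace.comap Prod.snd inferInstance) := by
          rw [hXeq, MeasurableSpace.comap_comp]; rfl
      _ ≤ MeasurableSpace.comap (fun ω => (A ω, X ω)) inferInstance :=
          MeasurableSpace.comap_mono measurable_snd.comap_le
  have hXmX : Measurable[MeasurableSpace.comap X inferInstance] X :=
    Measurable.of_comap_le le_rfl
  have hAXmAX : Measurable[MeasurableSpace.comap (fun ω => (A ω, X ω)) inferInstance]
      (fun ω => (A ω, X ω)) := Measurable.of_comap_le le_rfl
  -- absolute value of phiVec is at most 1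
  have habs_phi : ∀ (a : Fin m → Bool) (l : Option (Fin m)), |phiVec m a l| ≤ 1 := by
    intro a l
    match l with
    | none => simp [phiVec]
    | some i => by_cases h : a i <;> simp [phiVec, h]
  -- the regression part G(X)φ(A), coordinatewise
  have hGphi_meas : ∀ j : Fin m,
      Measurable fun ω => ∑ l : Option (Fin m), G j l (X ω) * phiVec m (A ω) l := by
    intro j
    exact Finset.measurable_sum _ fun l _ =>
      ((hG_meas j l).comp hX).mul (measurable_phiVec hA l)
  have hind_meas : ∀ a : Fin m → Bool,
      Measurable (fun ω => if A ω = a then (1 : ℝ) else 0) := by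
    intro a
    exact Measurable.ite (hA (measurableSet_singleton a)) measurable_const measurable_const
  have hs2_meas : ∀ a : Fin m → Bool, Measurable (fun ω =>
      (∑ k : Option (Fin m),
        (∑ l : Option (Fin m), phiVec m a l * TMat m (fun i => e i (X ω)) l k) *
          phiVec m (p (X ω)) k) ^ 2) := by
    intro a
    refine Measurable.pow_const ?_ 2
    refine Finset.measurable_sum _ fun k _ => ?_
    refine Measurable.mul ?_ (measurable_phiVec (hp.comp hX) k)
    refine Finset.measurable_sum _ fun l _ => ?_
    exact measurable_const.mul
      (measurable_TMatEntry (fun i => (he_meas i).comp hX) l k)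
  haveI hSF : SigmaFinite (μ.trim hmAX_le) := by infer_instance
  haveI hSFX : SigmaFinite (μ.trim hmX_le) := by infer_instance
  set mAX : MeasurableSpace Ω := MeasurableSpace.comap (fun ω => (A ω, X ω)) inferInstance
    with hmAXdef
  set mX : MeasurableSpace Ω := MeasurableSpace.comap X inferInstance with hmXdef
  -- main functions
  set W : Ω → ℝ := fun ω => ∑ j : Fin m, (1 / m : ℝ) *
      ∑ k : Option (Fin m), G j k (X ω) * phiVec m (p (X ω)) k with hWdef
  set U : Ω → ℝ := fun ω => ∑ j : Fin m, (1 / m : ℝ) *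
      (Y ω j - ∑ l : Option (Fin m), G j l (X ω) * phiVec m (A ω) l) with hUdef
  set S : Ω → ℝ := fun ω => ∑ k : Option (Fin m),
      (∑ l : Option (Fin m), phiVec m (A ω) l * TMat m (fun i => e i (X ω)) l k) *
        phiVec m (p (X ω)) k with hSdef
  set Qp : Ω → ℝ := fun ω => ∑ k : Option (Fin m), ∑ l : Option (Fin m),
      phiVec m (p (X ω)) k * TMat m (fun i => e i (X ω)) k l * phiVec m (p (X ω)) l
    with hQdef
  -- Z = W + U * S
  have hZeq : (fun ω =>
      drZ m (fun j k => G j k (X ω)) (Y ω) (A ω) (p (X ω)) (fun i => e i (X ω)))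
      = fun ω => W ω + U ω * S ω := by
    funext ω
    simp only [hWdef, hUdef, hSdef, drZ]
    have expand : ∀ (gv : Option (Fin m) → ℝ) (r : ℝ) (tv uv : Option (Fin m) → ℝ),
        ∑ k : Option (Fin m), (gv k + r * tv k) * uv k
          = (∑ k : Option (Fin m), gv k * uv k)
            + r * ∑ k : Option (Fin m), tv k * uv k := by
      intro gv r tv uv
      rw [Finset.mul_sum, ← Finset.sum_add_distrib]
      exact Finset.sum_congr rfl fun k _ => by ring
    calc ∑ j : Fin m, (1 / m : ℝ) * ∑ k : Option (Fin m),
          (G j k (X ω) + (Y ω j - ∑ l : Option (Fin m), G j l (X ω) * phiVec m (A ω) l) *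
            ∑ l : Option (Fin m), phiVec m (A ω) l * TMat m (fun i => e i (X ω)) l k) *
              phiVec m (p (X ω)) k
        = ∑ j : Fin m, ((1 / m : ℝ) *
            ∑ k : Option (Fin m), G j k (X ω) * phiVec m (p (X ω)) k
          + ((1 / m : ℝ) *
              (Y ω j - ∑ l : Option (Fin m), G j l (X ω) * phiVec m (A ω) l)) *
            ∑ k : Option (Fin m),
              (∑ l : Option (Fin m), phiVec m (A ω) l * TMat m (fun i => e i (X ω)) l k) *
                phiVec m (p (X ω)) k) := by
          refine Finset.sum_congr rfl fun j _ => ?_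
          rw [expand]
          ring
      _ = _ := by
          rw [Finset.sum_add_distrib, ← Finset.sum_mul]
  rw [hZeq] at hZ2 ⊢
  have hGphi_bdd : ∀ (j : Fin m) (ω : Ω),
      ‖∑ l : Option (Fin m), G j l (X ω) * phiVec m (A ω) l‖
        ≤ (Fintype.card (Option (Fin m))) * |C| := by
    intro j ω
    rw [Real.norm_eq_abs]
    refine (Finset.abs_sum_le_sum_abs _ _).trans ?_
    calc ∑ l : Option (Fin m), |G j l (X ω) * phiVec m (A ω) l|
        ≤ ∑ _l : Option (Fin m), |C| := by
          refine Finset.sum_le_sum fun l _ => ?_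
          rw [abs_mul]
          calc |G j l (X ω)| * |phiVec m (A ω) l|
              ≤ |C| * 1 := mul_le_mul ((hC j l (X ω)).trans (le_abs_self C))
                (habs_phi _ _) (abs_nonneg _) (abs_nonneg _)
            _ = |C| := mul_one _
      _ = (Fintype.card (Option (Fin m))) * |C| := by
          rw [Finset.sum_const, nsmul_eq_mul, Finset.card_univ]
  have hGphi2 : ∀ j : Fin m,
      MemLp (fun ω => ∑ l : Option (Fin m), G j l (X ω) * phiVec m (A ω) l) 2 μ := by
    intro j
    refine MemLp.of_bound ((hGphi_meas j).aestronglyMeasurable) _ (ae_of_all _ (hGphi_bdd j))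
  have hGphi_int : ∀ j : Fin m,
      Integrable (fun ω => ∑ l : Option (Fin m), G j l (X ω) * phiVec m (A ω) l) μ :=
    fun j => (hGphi2 j).integrable one_le_two
  -- U is square integrable
  have hU2 : MemLp U 2 μ := by
    rw [hUdef]
    refine memLp_finset_sum _ fun j _ => ?_
    exact ((hY2 j).sub (hGphi2 j)).const_mul ((1 : ℝ) / m)
  have hU_int : Integrable U μ := hU2.integrable one_le_two
  -- conditional expectation of U given (A, X) vanishes
  have hUcond : μ[U | mAX] =ᵐ[μ] 0 := by
    have hsum : U = ∑ j : Fin m, (fun ω => (1 / m : ℝ) *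
        (Y ω j - ∑ l : Option (Fin m), G j l (X ω) * phiVec m (A ω) l)) := by
      funext ω
      rw [hUdef, Finset.sum_apply]
    have hint : ∀ j ∈ Finset.univ, Integrable (fun ω => (1 / m : ℝ) *
        (Y ω j - ∑ l : Option (Fin m), G j l (X ω) * phiVec m (A ω) l)) μ :=
      fun j _ => ((hYint j).sub (hGphi_int j)).const_mul _
    have hj0 : ∀ j : Fin m, μ[(fun ω => (1 / m : ℝ) *
        (Y ω j - ∑ l : Option (Fin m), G j l (X ω) * phiVec m (A ω) l)) | mAX]
          =ᵐ[μ] 0 := by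
      intro j
      have hgid : μ[(fun ω => ∑ l : Option (Fin m), G j l (X ω) * phiVec m (A ω) l) | mAX]
          = (fun ω => ∑ l : Option (Fin m), G j l (X ω) * phiVec m (A ω) l) := by
        refine condExp_of_stronglyMeasurable hmAX_le ?_ (hGphi_int j)
        have hF : Measurable (fun q : (Fin m → Bool) × 𝒳 =>
            ∑ l : Option (Fin m), G j l q.2 * phiVec m q.1 l) :=
          Finset.measurable_sum _ fun l _ =>
            ((hG_meas j l).comp measurable_snd).mul (measurable_phiVec measurable_fst l)
        exact (hF.comp hAXmAX).stronglyMeasurable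
      have h1 : μ[(fun ω => Y ω j
          - ∑ l : Option (Fin m), G j l (X ω) * phiVec m (A ω) l) | mAX] =ᵐ[μ] 0 := by
        have hsub := condExp_sub (μ := μ) (m := mAX) (hYint j) (hGphi_int j)
        have hfg : (fun ω => Y ω j - ∑ l : Option (Fin m), G j l (X ω) * phiVec m (A ω) l)
            = ((fun ω => Y ω j)
              - fun ω => ∑ l : Option (Fin m), G j l (X ω) * phiVec m (A ω) l) := rfl
        rw [hfg]
        filter_upwards [hsub, hadd j] with ω ha hb
        simp only [Pi.sub_apply] at ha
        simp only [Pi.zero_apply]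
        rw [ha, hb, congrFun hgid ω]
        ring
      have hsmul := condExp_smul (μ := μ) (m := mAX) ((1 : ℝ) / m)
        (fun ω => Y ω j - ∑ l : Option (Fin m), G j l (X ω) * phiVec m (A ω) l)
      have heq : (fun ω => (1 / m : ℝ) *
          (Y ω j - ∑ l : Option (Fin m), G j l (X ω) * phiVec m (A ω) l))
          = ((1 / m : ℝ) • fun ω => Y ω j
              - ∑ l : Option (Fin m), G j l (X ω) * phiVec m (A ω) l) := rfl
      rw [heq]
      refine hsmul.trans ?_
      filter_upwards [h1] with ω h
      simp only [Pi.smul_apply, Pi.zero_apply, smul_eq_mul] at h ⊢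
      rw [h, mul_zero]
    rw [hsum]
    refine (condExp_finset_sum hint mAX).trans ?_
    have hall : ∀ᵐ ω ∂μ, ∀ j : Fin m, (μ[(fun ω => (1 / m : ℝ) *
        (Y ω j - ∑ l : Option (Fin m), G j l (X ω) * phiVec m (A ω) l)) | mAX]) ω = 0 := by
      rw [ae_all_iff]
      intro j
      filter_upwards [hj0 j] with ω h
      simpa using h
    filter_upwards [hall] with ω h
    simp only [Finset.sum_apply, Pi.zero_apply]
    exact Finset.sum_eq_zero fun j _ => h j
  -- strong measurability of S w.r.t. mAX and of W w.r.t. mX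
  have hS_sm : StronglyMeasurable[mAX] S := by
    have hF : Measurable (fun q : (Fin m → Bool) × 𝒳 =>
        ∑ k : Option (Fin m),
          (∑ l : Option (Fin m), phiVec m q.1 l * TMat m (fun i => e i q.2) l k) *
            phiVec m (p q.2) k) := by
      refine Finset.measurable_sum _ fun k _ => ?_
      refine Measurable.mul ?_ (measurable_phiVec (hp.comp measurable_snd) k)
      refine Finset.measurable_sum _ fun l _ => ?_
      exact (measurable_phiVec measurable_fst l).mul
        (measurable_TMatEntry (fun i => (he_meas i).comp measurable_snd) l k)
    exact (hF.comp hAXmAX).stronglyMeasurable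
  have hW_sm : StronglyMeasurable[mX] W := by
    have hF : Measurable (fun x : 𝒳 => ∑ j : Fin m, (1 / m : ℝ) *
        ∑ k : Option (Fin m), G j k x * phiVec m (p x) k) := by
      refine Finset.measurable_sum _ fun j _ => Measurable.const_mul ?_ _
      exact Finset.measurable_sum _ fun k _ => (hG_meas j k).mul (measurable_phiVec hp k)
    exact (hF.comp hXmX).stronglyMeasurable
  -- U * S is square integrable
  have hUS2 : MemLp (fun ω => U ω * S ω) 2 μ := by
    have heq : (fun ω => U ω * S ω) = (fun ω => (W ω + U ω * S ω) - W ω) := by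
      funext ω; ring
    rw [heq]
    exact hZ2.sub hW2
  have hUS_int : Integrable (fun ω => U ω * S ω) μ := hUS2.integrable one_le_two
  have hW_int : Integrable W μ := hW2.integrable one_le_two
  -- E[US] = 0
  have hSU_int : Integrable (S * U) μ :=
    hUS_int.congr (ae_of_all _ fun ω => mul_comm (U ω) (S ω))
  have hEUS : ∫ ω, U ω * S ω ∂μ = 0 := by
    have hmul := condExp_mul_of_stronglyMeasurable_left (μ := μ) hS_sm hSU_int hU_int
    have h0 : μ[S * U | mAX] =ᵐ[μ] 0 := by
      refine hmul.trans ?_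
      filter_upwards [hUcond] with ω h
      simp only [Pi.mul_apply, Pi.zero_apply] at h ⊢
      rw [h, mul_zero]
    calc ∫ ω, U ω * S ω ∂μ = ∫ ω, (S * U) ω ∂μ := by
          refine integral_congr_ae (ae_of_all _ fun ω => ?_)
          simp [mul_comm]
      _ = ∫ ω, (μ[S * U | mAX]) ω ∂μ := (integral_condExp (f := S * U) hmAX_le).symm
      _ = 0 := by rw [integral_congr_ae h0]; simp
  -- E[W·US] = 0
  have hWUS_int : Integrable ((fun ω => W ω * S ω) * U) μ := by
    have h := memLp_two_mul_integrable' hW2 hUS2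
    refine h.congr (ae_of_all _ fun ω => ?_)
    simp only [Pi.mul_apply]
    ring
  have hEWUS : ∫ ω, W ω * (U ω * S ω) ∂μ = 0 := by
    have hWS_sm : StronglyMeasurable[mAX] (fun ω => W ω * S ω) :=
      (hW_sm.mono hmX_le_mAX).mul hS_sm
    have hmul := condExp_mul_of_stronglyMeasurable_left (μ := μ) hWS_sm hWUS_int hU_int
    have h0 : μ[(fun ω => W ω * S ω) * U | mAX] =ᵐ[μ] 0 := by
      refine hmul.trans ?_
      filter_upwards [hUcond] with ω h
      simp only [Pi.mul_apply, Pi.zero_apply] at h ⊢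
      rw [h, mul_zero]
    calc ∫ ω, W ω * (U ω * S ω) ∂μ = ∫ ω, ((fun ω => W ω * S ω) * U) ω ∂μ := by
          refine integral_congr_ae (ae_of_all _ fun ω => ?_)
          simp only [Pi.mul_apply]
          ring
      _ = ∫ ω, (μ[(fun ω => W ω * S ω) * U | mAX]) ω ∂μ :=
          (integral_condExp (f := (fun ω => W ω * S ω) * U) hmAX_le).symm
      _ = 0 := by rw [integral_congr_ae h0]; simp
  -- E[(US)²] = ∫ S² σ2
  have hU2_int : Integrable (fun ω => U ω ^ 2) μ := hU2.integrable_sq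
  have hS2_sm : StronglyMeasurable[mAX] (fun ω => S ω ^ 2) := by
    have heq : (fun ω => S ω ^ 2) = fun ω => S ω * S ω := by funext ω; ring
    rw [heq]
    exact hS_sm.mul hS_sm
  have hS2U2_int : Integrable ((fun ω => S ω ^ 2) * fun ω => U ω ^ 2) μ := by
    have h := hUS2.integrable_sq
    refine h.congr (ae_of_all _ fun ω => ?_)
    simp only [Pi.mul_apply]
    ring
  have hhomoU : μ[(fun ω => U ω ^ 2) | mAX] =ᵐ[μ] fun _ => σ2 := by
    have heq : (fun ω => (∑ j : Fin m, (1 / m : ℝ) *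
        (Y ω j - ∑ l : Option (Fin m), G j l (X ω) * phiVec m (A ω) l)) ^ 2)
        = fun ω => U ω ^ 2 := by
      funext ω
      rw [hUdef]
    rw [← heq]
    exact hhomo
  have hcond2 := condExp_mul_of_stronglyMeasurable_left (μ := μ) hS2_sm hS2U2_int hU2_int
  have hcondS2 : μ[(fun ω => S ω ^ 2) * (fun ω => U ω ^ 2) | mAX]
      =ᵐ[μ] fun ω => S ω ^ 2 * σ2 := by
    refine hcond2.trans ?_
    filter_upwards [hhomoU] with ω h
    simp only [Pi.mul_apply] at h ⊢
    rw [h]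
  have hEU2S2 : ∫ ω, (U ω * S ω) ^ 2 ∂μ = ∫ ω, S ω ^ 2 * σ2 ∂μ := by
    calc ∫ ω, (U ω * S ω) ^ 2 ∂μ
        = ∫ ω, ((fun ω => S ω ^ 2) * (fun ω => U ω ^ 2)) ω ∂μ := by
          refine integral_congr_ae (ae_of_all _ fun ω => ?_)
          simp only [Pi.mul_apply]
          ring
      _ = ∫ ω, (μ[(fun ω => S ω ^ 2) * (fun ω => U ω ^ 2) | mAX]) ω ∂μ :=
          (integral_condExp (f := (fun ω => S ω ^ 2) * (fun ω => U ω ^ 2)) hmAX_le).symm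
      _ = ∫ ω, S ω ^ 2 * σ2 ∂μ := integral_congr_ae hcondS2
  -- key: ∫ S² σ2 = σ2 ∫ Qp
  have hKey : ∫ ω, S ω ^ 2 * σ2 ∂μ = σ2 * ∫ ω, Qp ω ∂μ := by
    rcases hσ2.eq_or_lt with h0 | hpos
    · rw [← h0]
      simp
    · have hS2σ_int : Integrable (fun ω => S ω ^ 2 * σ2) μ :=
        (integrable_condExp (μ := μ)
          (f := (fun ω => S ω ^ 2) * (fun ω => U ω ^ 2)) (m := mAX)).congr hcondS2
      have hS2_int : Integrable (fun ω => S ω ^ 2) μ := by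
        have h := hS2σ_int.mul_const σ2⁻¹
        refine h.congr (ae_of_all _ fun ω => ?_)
        field_simp
      have hS2Q : ∫ ω, S ω ^ 2 ∂μ = ∫ ω, Qp ω ∂μ := by
        set s2 : (Fin m → Bool) → Ω → ℝ := fun a ω =>
          (∑ k : Option (Fin m),
            (∑ l : Option (Fin m), phiVec m a l * TMat m (fun i => e i (X ω)) l k) *
              phiVec m (p (X ω)) k) ^ 2 with hs2def
        have hpt : ∀ ω, S ω ^ 2 = ∑ a : Fin m → Bool,
            (if A ω = a then (1 : ℝ) else 0) * s2 a ω := by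
          intro ω
          have h1 : ∀ a : Fin m → Bool, (if A ω = a then (1 : ℝ) else 0) * s2 a ω
              = if A ω = a then s2 a ω else 0 := by
            intro a; split <;> simp
          rw [Finset.sum_congr rfl fun a _ => h1 a, Finset.sum_ite_eq]
          simp [hs2def, hSdef]
        have hterm_int : ∀ a : Fin m → Bool,
            Integrable (fun ω => (if A ω = a then (1 : ℝ) else 0) * s2 a ω) μ := by
          intro a
          refine Integrable.mono' hS2_int
            (((hind_meas a).mul (hs2_meas a)).aestronglyMeasurable)
            (ae_of_all _ fun ω => ?_)
          by_cases h : A ω = a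
          · rw [if_pos h, one_mul, Real.norm_eq_abs, abs_of_nonneg (by positivity), ← h]
          · rw [if_neg h, zero_mul, norm_zero]
            positivity
        have hstepA : ∫ ω, S ω ^ 2 ∂μ = ∑ a : Fin m → Bool,
            ∫ ω, (if A ω = a then (1 : ℝ) else 0) * s2 a ω ∂μ := by
          rw [← integral_finset_sum _ fun a _ => hterm_int a]
          exact integral_congr_ae (ae_of_all _ fun ω => hpt ω)
        have hprod_int : ∀ a : Fin m → Bool,
            Integrable ((s2 a) * fun ω => if A ω = a then (1 : ℝ) else 0) μ := by
          intro a
          refine (hterm_int a).congr (ae_of_all _ fun ω => ?_)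
          simp only [Pi.mul_apply]
          ring
        have hs2_smX : ∀ a : Fin m → Bool, StronglyMeasurable[mX] (s2 a) := by
          intro a
          have hF : Measurable (fun x : 𝒳 =>
              (∑ k : Option (Fin m),
                (∑ l : Option (Fin m), phiVec m a l * TMat m (fun i => e i x) l k) *
                  phiVec m (p x) k) ^ 2) := by
            refine Measurable.pow_const ?_ 2
            refine Finset.measurable_sum _ fun k _ => ?_
            refine Measurable.mul ?_ (measurable_phiVec hp k)
            refine Finset.measurable_sum _ fun l _ => ?_
            exact measurable_const.mul (measurable_TMatEntry he_meas l k)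
          exact (hF.comp hXmX).stronglyMeasurable
        have hind_int : ∀ a : Fin m → Bool,
            Integrable (fun ω => if A ω = a then (1 : ℝ) else 0) μ := by
          intro a
          refine ⟨(hind_meas a).aestronglyMeasurable, ?_⟩
          refine HasFiniteIntegral.of_bounded (C := 1) (ae_of_all _ fun ω => ?_)
          split <;> simp
        have hcondB : ∀ a : Fin m → Bool,
            μ[(s2 a) * (fun ω => if A ω = a then (1 : ℝ) else 0) | mX]
              =ᵐ[μ] fun ω => s2 a ω * ∏ j : Fin m, eOf (e j (X ω)) (a j) := by
          intro a
          refine (condExp_mul_of_stronglyMeasurable_left (μ := μ) (hs2_smX a) (hprod_int a)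
            (hind_int a)).trans ?_
          filter_upwards [hfac a] with ω h
          simp only [Pi.mul_apply]
          rw [h]
        have hstepB : ∀ a : Fin m → Bool,
            ∫ ω, (if A ω = a then (1 : ℝ) else 0) * s2 a ω ∂μ
              = ∫ ω, s2 a ω * ∏ j : Fin m, eOf (e j (X ω)) (a j) ∂μ := by
          intro a
          calc ∫ ω, (if A ω = a then (1 : ℝ) else 0) * s2 a ω ∂μ
              = ∫ ω, ((s2 a) * fun ω => if A ω = a then (1 : ℝ) else 0) ω ∂μ := by
                refine integral_congr_ae (ae_of_all _ fun ω => ?_)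
                simp only [Pi.mul_apply]
                ring
            _ = ∫ ω, (μ[(s2 a) * (fun ω => if A ω = a then (1 : ℝ) else 0) | mX]) ω ∂μ :=
                (integral_condExp
                  (f := (s2 a) * fun ω => if A ω = a then (1 : ℝ) else 0) hmX_le).symm
            _ = _ := integral_congr_ae (hcondB a)
        have hB_int : ∀ a : Fin m → Bool,
            Integrable (fun ω => s2 a ω * ∏ j : Fin m, eOf (e j (X ω)) (a j)) μ :=
          fun a => (integrable_condExp (μ := μ)
            (f := (s2 a) * fun ω => if A ω = a then (1 : ℝ) else 0)
            (m := mX)).congr (hcondB a)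
        have hstepC : ∑ a : Fin m → Bool,
            ∫ ω, s2 a ω * ∏ j : Fin m, eOf (e j (X ω)) (a j) ∂μ = ∫ ω, Qp ω ∂μ := by
          rw [← integral_finset_sum _ fun a _ => hB_int a]
          refine integral_congr_ae (ae_of_all _ fun ω => ?_)
          have hq := quad_main m (fun i => e i (X ω)) (fun j => he j (X ω))
            (phiVec m (p (X ω)))
          show ∑ a : Fin m → Bool, s2 a ω * ∏ j : Fin m, eOf (e j (X ω)) (a j) = Qp ω
          have hQω : Qp ω = ∑ k : Option (Fin m), ∑ l : Option (Fin m),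
              phiVec m (p (X ω)) k * TMat m (fun i => e i (X ω)) k l *
                phiVec m (p (X ω)) l := by rw [hQdef]
          rw [hQω, ← hq]
          exact Finset.sum_congr rfl fun a _ => by rw [hs2def]; ring
        rw [hstepA, Finset.sum_congr rfl fun a _ => hstepB a, hstepC]
      rw [← hS2Q, integral_mul_const]
      rw [hS2Q]
      ring
  -- assembling everything
  have hEZ : ∫ ω, (W ω + U ω * S ω) ∂μ = ∫ ω, W ω ∂μ := by
    rw [integral_add hW_int hUS_int, hEUS, add_zero]
  have hW2_int : Integrable (fun ω => W ω ^ 2) μ := hW2.integrable_sq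
  have hUS2_int : Integrable (fun ω => (U ω * S ω) ^ 2) μ := hUS2.integrable_sq
  have hWUS_int2 : Integrable (fun ω => W ω * (U ω * S ω)) μ := by
    refine hWUS_int.congr (ae_of_all _ fun ω => ?_)
    simp only [Pi.mul_apply]
    ring
  have hZsq : ∫ ω, (W ω + U ω * S ω) ^ 2 ∂μ
      = ∫ ω, W ω ^ 2 ∂μ + σ2 * ∫ ω, Qp ω ∂μ := by
    have hsplit : (fun ω => (W ω + U ω * S ω) ^ 2)
        = fun ω => W ω ^ 2 + (2 * (W ω * (U ω * S ω)) + (U ω * S ω) ^ 2) := by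
      funext ω; ring
    have h2' : Integrable (fun ω => 2 * (W ω * (U ω * S ω))) μ := hWUS_int2.const_mul 2
    have h23 : Integrable (fun ω => 2 * (W ω * (U ω * S ω)) + (U ω * S ω) ^ 2) μ :=
      h2'.add hUS2_int
    rw [hsplit, integral_add hW2_int h23, integral_add h2' hUS2_int, integral_const_mul,
      hEWUS, hEU2S2, hKey]
    ring
  -- final variance computation
  have hv1 : variance (fun ω => W ω + U ω * S ω) μ
      = ∫ ω, (W ω + U ω * S ω) ^ 2 ∂μ - (∫ ω, (W ω + U ω * S ω) ∂μ) ^ 2 := by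
    rw [variance_eq_sub hZ2]
    rfl
  have hv2 : variance W μ = ∫ ω, W ω ^ 2 ∂μ - (∫ ω, W ω ∂μ) ^ 2 := by
    rw [variance_eq_sub hW2]
    rfl
  rw [hv1, hv2, hEZ, hZsq]
  ring
end
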